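/- arXiv:1809.07816 — 8 statements merged into one kernel-verified Lean document; each statement's English description precedes it below -/
import Mathlib

section
/- Let n ≥ 1. A nonempty subset S of Z_{2n} is a subalgebra of Z_{2n} if and only if S = U ∪ (−U) for some nonempty subset U of {1,…,n}. Moreover, in that case |S| = 2|U| and there is a bijective homomorphism from S onto Z_{2|U|}; in particular every proper subalgebra of Z_{2n} is isomorphic to Z_{2m} for some m < n. -/
/-- Sugihara implication on the integers. -/
def SImp (a b : ℤ) : ℤ := if a ≤ b then max (-a) b else min (-a) b

/-- The universe of the Sugihara algebra `Z_{2n+1}`. -/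
def Zodd (n : ℕ) : Set ℤ := {a : ℤ | -(n : ℤ) ≤ a ∧ a ≤ (n : ℤ)}

/-- The universe of the Sugihara algebra `Z_{2n}`. -/
def Zeven (n : ℕ) : Set ℤ := {a : ℤ | (-(n : ℤ) ≤ a ∧ a ≤ (n : ℤ)) ∧ a ≠ 0}

/-- `S` is a subalgebra of (the subset `Z` of) the Sugihara algebra on `ℤ`. -/
def Subalg (Z S : Set ℤ) : Prop :=
  S.Nonempty ∧ S ⊆ Z ∧
    ∀ a ∈ S, ∀ b ∈ S, min a b ∈ S ∧ max a b ∈ S ∧ -a ∈ S ∧ SImp a b ∈ S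

/-- `h` is a homomorphism from `S` to `T` (preserving ∧, ∨, ¬, →). -/
def SHom (S T : Set ℤ) (h : ℤ → ℤ) : Prop :=
  Set.MapsTo h S T ∧
    ∀ a ∈ S, ∀ b ∈ S,
      h (min a b) = min (h a) (h b) ∧ h (max a b) = max (h a) (h b) ∧
      h (-a) = -h a ∧ h (SImp a b) = SImp (h a) (h b)

lemma subalg_of_neg_closed {Z S : Set ℤ} (hne : S.Nonempty) (hsub : S ⊆ Z)
    (hneg : ∀ a ∈ S, -a ∈ S) : Subalg Z S := by
  refine ⟨hne, hsub, fun a ha b hb => ⟨?_, ?_, hneg a ha, ?_⟩⟩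
  · rcases min_choice a b with h | h <;> rw [h] <;> assumption
  · rcases max_choice a b with h | h <;> rw [h] <;> assumption
  · unfold SImp
    split
    · rcases max_choice (-a) b with h | h <;> rw [h]
      exacts [hneg a ha, hb]
    · rcases min_choice (-a) b with h | h <;> rw [h]
      exacts [hneg a ha, hb]

def cnt (F : Finset ℤ) (a : ℤ) : ℤ := ((F.filter (fun u => u ≤ a)).card : ℤ)

noncomputable def hmap (F : Finset ℤ) (a : ℤ) : ℤ :=
  if 0 < a then cnt F a else -(cnt F (-a))

lemma filter_le_sub (F : Finset ℤ) {a b : ℤ} (h : a ≤ b) :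
    F.filter (fun u => u ≤ a) ⊆ F.filter (fun u => u ≤ b) := by
  intro u hu
  simp only [Finset.mem_filter] at hu ⊢
  exact ⟨hu.1, le_trans hu.2 h⟩

lemma cnt_mono (F : Finset ℤ) {a b : ℤ} (h : a ≤ b) : cnt F a ≤ cnt F b := by
  unfold cnt
  exact_mod_cast Finset.card_le_card (filter_le_sub F h)

lemma cnt_strict (F : Finset ℤ) {a b : ℤ} (hb : b ∈ F) (h : a < b) :
    cnt F a < cnt F b := by
  have hsub := filter_le_sub F h.le
  have : F.filter (fun u => u ≤ a) ⊂ F.filter (fun u => u ≤ b) := by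
    refine (Finset.ssubset_iff_of_subset hsub).2 ⟨b, ?_, ?_⟩
    · simp [Finset.mem_filter, hb]
    · simp [Finset.mem_filter, hb]; omega
  unfold cnt
  exact_mod_cast Finset.card_lt_card this

lemma cnt_pos (F : Finset ℤ) {a : ℤ} (ha : a ∈ F) : 1 ≤ cnt F a := by
  have : 0 < (F.filter (fun u => u ≤ a)).card :=
    Finset.card_pos.2 ⟨a, by simp [Finset.mem_filter, ha]⟩
  unfold cnt
  exact_mod_cast this

lemma cnt_le (F : Finset ℤ) (a : ℤ) : cnt F a ≤ F.card := by
  unfold cnt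
  exact_mod_cast Finset.card_le_card (Finset.filter_subset _ F)

lemma cnt_surj (F : Finset ℤ) {k : ℤ} (h1 : 1 ≤ k) (h2 : k ≤ F.card) :
    ∃ a ∈ F, cnt F a = k := by
  classical
  have hinj : Set.InjOn (cnt F) F := by
    intro a ha b hb hab
    rcases lt_trichotomy a b with h | h | h
    · exact absurd hab (cnt_strict F hb h).ne
    · exact h
    · exact absurd hab.symm (cnt_strict F ha h).ne
  have hcard : (F.image (cnt F)).card = F.card := Finset.card_image_of_injOn hinj
  have hsubI : F.image (cnt F) ⊆ Finset.Icc 1 (F.card : ℤ) := by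
    intro y hy
    rcases Finset.mem_image.1 hy with ⟨a, ha, rfl⟩
    exact Finset.mem_Icc.2 ⟨cnt_pos F ha, cnt_le F a⟩
  have hIcard : (Finset.Icc 1 (F.card : ℤ)).card = F.card := by
    rw [Int.card_Icc]; omega
  have heq : F.image (cnt F) = Finset.Icc 1 (F.card : ℤ) :=
    Finset.eq_of_subset_of_card_le hsubI (by omega)
  have : k ∈ F.image (cnt F) := heq ▸ Finset.mem_Icc.2 ⟨h1, h2⟩
  rcases Finset.mem_image.1 this with ⟨a, ha, hka⟩
  exact ⟨a, ha, hka⟩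

lemma Zeven_eq (n : ℕ) :
    Zeven n = Set.Icc 1 (n : ℤ) ∪ (fun x : ℤ => -x) '' Set.Icc 1 (n : ℤ) := by
  ext a
  simp only [Zeven, Set.mem_setOf_eq, Set.mem_union, Set.mem_Icc, Set.mem_image]
  constructor
  · rintro ⟨⟨h1, h2⟩, h3⟩
    rcases lt_or_gt_of_ne h3 with h | h
    · exact Or.inr ⟨-a, ⟨by omega, by omega⟩, by ring⟩
    · exact Or.inl ⟨by omega, h2⟩
  · rintro (⟨h1, h2⟩ | ⟨x, ⟨h1, h2⟩, rfl⟩)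
    · exact ⟨⟨by omega, h2⟩, by omega⟩
    · exact ⟨⟨by omega, by omega⟩, by omega⟩

lemma ncard_Icc_one (n : ℕ) : (Set.Icc (1:ℤ) (n:ℤ)).ncard = n := by
  rw [Set.ncard_eq_toFinset_card', Set.toFinset_Icc, Int.card_Icc]
  omega

lemma ncard_double (U : Set ℤ) (hUfin : U.Finite) (hpos : ∀ a ∈ U, (1:ℤ) ≤ a) :
    (U ∪ (fun x : ℤ => -x) '' U).ncard = 2 * U.ncard := by
  have hdisj : Disjoint U ((fun x : ℤ => -x) '' U) := by
    rw [Set.disjoint_left]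
    rintro a ha ⟨x, hx, rfl⟩
    have := hpos x hx
    have := hpos (-x) ha
    omega
  rw [Set.ncard_union_eq hdisj hUfin (hUfin.image _),
      Set.ncard_image_of_injective U neg_injective]
  ring

lemma key (U : Set ℤ) (hUfin : U.Finite) (hpos : ∀ a ∈ U, (1:ℤ) ≤ a) :
    SHom (U ∪ (fun x : ℤ => -x) '' U) (Zeven U.ncard) (hmap hUfin.toFinset) ∧
      Set.BijOn (hmap hUfin.toFinset) (U ∪ (fun x : ℤ => -x) '' U) (Zeven U.ncard) := by
  classical
  set F := hUfin.toFinset with hFdef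
  set S := U ∪ (fun x : ℤ => -x) '' U with hSdef
  have hFU : ∀ a : ℤ, a ∈ F ↔ a ∈ U := fun a => hUfin.mem_toFinset
  have hcard : (U.ncard : ℤ) = (F.card : ℤ) := by
    rw [Set.ncard_eq_toFinset_card _ hUfin]
  have hSmem : ∀ a ∈ S, (0 < a ∧ a ∈ F) ∨ (a < 0 ∧ -a ∈ F) := by
    rintro a (ha | ⟨x, hx, rfl⟩)
    · exact Or.inl ⟨by have := hpos a ha; omega, (hFU a).2 ha⟩
    · refine Or.inr ⟨show -x < 0 by have := hpos x hx; omega, by simpa [hFU] using hx⟩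
  have hne0 : ∀ a ∈ S, a ≠ 0 := by
    intro a ha; rcases hSmem a ha with ⟨h, _⟩ | ⟨h, _⟩ <;> omega
  have hSneg : ∀ a ∈ S, -a ∈ S := by
    rintro a (ha | ⟨x, hx, rfl⟩)
    · exact Or.inr ⟨a, ha, rfl⟩
    · show -(-x) ∈ S; rw [neg_neg]; exact Or.inl hx
  have hval_pos : ∀ a : ℤ, 0 < a → hmap F a = cnt F a := fun a ha => if_pos ha
  have hval_neg : ∀ a : ℤ, a < 0 → hmap F a = -(cnt F (-a)) := fun a ha => if_neg (by omega)
  have hodd : ∀ a : ℤ, a ≠ 0 → hmap F (-a) = -(hmap F a) := by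
    intro a ha
    rcases lt_or_gt_of_ne ha with h | h
    · rw [hval_neg a h, hval_pos (-a) (by omega), neg_neg]
    · rw [hval_pos a h, hval_neg (-a) (by omega), neg_neg]
  have hbound : ∀ a ∈ S, (0 < a → 1 ≤ hmap F a ∧ hmap F a ≤ F.card) ∧
      (a < 0 → -(F.card : ℤ) ≤ hmap F a ∧ hmap F a ≤ -1) := by
    intro a ha
    rcases hSmem a ha with ⟨h0, hF'⟩ | ⟨h0, hF'⟩
    · refine ⟨fun _ => ?_, fun h => absurd h (by omega)⟩
      rw [hval_pos a h0]
      exact ⟨cnt_pos F hF', cnt_le F a⟩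
    · refine ⟨fun h => absurd h (by omega), fun _ => ?_⟩
      rw [hval_neg a h0]
      have h1 := cnt_pos F hF'
      have h2 := cnt_le F (-a)
      omega
  have hmono : ∀ a ∈ S, ∀ b ∈ S, a < b → hmap F a < hmap F b := by
    intro a ha b hb hab
    rcases hSmem a ha with ⟨h0a, hFa⟩ | ⟨h0a, hFa⟩ <;>
      rcases hSmem b hb with ⟨h0b, hFb⟩ | ⟨h0b, hFb⟩
    · rw [hval_pos a h0a, hval_pos b h0b]; exact cnt_strict F hFb hab
    · omega
    · have h1 := (hbound a ha).2 h0a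
      have h2 := (hbound b hb).1 h0b
      omega
    · rw [hval_neg a h0a, hval_neg b h0b]
      have := cnt_strict F hFa (show -b < -a by omega)
      omega
  have hle : ∀ a ∈ S, ∀ b ∈ S, (a ≤ b ↔ hmap F a ≤ hmap F b) := by
    intro a ha b hb
    constructor
    · intro h
      rcases eq_or_lt_of_le h with rfl | h
      · exact le_refl _
      · exact (hmono a ha b hb h).le
    · intro h
      by_contra hc
      have := hmono b hb a ha (by omega)
      omega
  have hmax : ∀ a ∈ S, ∀ b ∈ S, hmap F (max a b) = max (hmap F a) (hmap F b) := by
    intro a ha b hb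
    rcases le_total a b with h | h
    · rw [max_eq_right h, max_eq_right ((hle a ha b hb).1 h)]
    · rw [max_eq_left h, max_eq_left ((hle b hb a ha).1 h)]
  have hmin : ∀ a ∈ S, ∀ b ∈ S, hmap F (min a b) = min (hmap F a) (hmap F b) := by
    intro a ha b hb
    rcases le_total a b with h | h
    · rw [min_eq_left h, min_eq_left ((hle a ha b hb).1 h)]
    · rw [min_eq_right h, min_eq_right ((hle b hb a ha).1 h)]
  have hmaps : Set.MapsTo (hmap F) S (Zeven U.ncard) := by
    intro a ha
    have hb := hbound a ha
    simp only [Zeven, Set.mem_setOf_eq]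
    rcases hSmem a ha with ⟨h0, _⟩ | ⟨h0, _⟩
    · have := hb.1 h0
      refine ⟨⟨by omega, by omega⟩, by omega⟩
    · have := hb.2 h0
      refine ⟨⟨by omega, by omega⟩, by omega⟩
  have hSimp : ∀ a ∈ S, ∀ b ∈ S, hmap F (SImp a b) = SImp (hmap F a) (hmap F b) := by
    intro a ha b hb
    have hna := hSneg a ha
    have h0a : a ≠ 0 := hne0 a ha
    unfold SImp
    rcases le_or_gt a b with h | h
    · rw [if_pos h, if_pos ((hle a ha b hb).1 h), hmax (-a) hna b hb, hodd a h0a]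
    · have hlt := hmono b hb a ha h
      rw [if_neg (by omega), if_neg (by omega), hmin (-a) hna b hb, hodd a h0a]
  have hinj : Set.InjOn (hmap F) S := by
    intro a ha b hb hab
    by_contra hc
    rcases lt_or_gt_of_ne hc with h | h
    · exact absurd hab (hmono a ha b hb h).ne
    · exact absurd hab.symm (hmono b hb a ha h).ne
  have hsurj : Set.SurjOn (hmap F) S (Zeven U.ncard) := by
    intro y hy
    obtain ⟨⟨hy1, hy2⟩, hy3⟩ := hy
    rcases lt_or_gt_of_ne hy3 with h | h
    · obtain ⟨a, haF, hac⟩ := cnt_surj F (show (1:ℤ) ≤ -y by omega) (by omega)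
      have haU : a ∈ U := (hFU a).1 haF
      have haS : a ∈ S := Or.inl haU
      refine ⟨-a, hSneg a haS, ?_⟩
      rw [hodd a (hne0 a haS), hval_pos a (by have := hpos a haU; omega), hac]
      omega
    · obtain ⟨a, haF, hac⟩ := cnt_surj F (show (1:ℤ) ≤ y by omega) (by omega)
      have haU : a ∈ U := (hFU a).1 haF
      refine ⟨a, Or.inl haU, ?_⟩
      rw [hval_pos a (by have := hpos a haU; omega), hac]
  exact ⟨⟨hmaps, fun a ha b hb =>
      ⟨hmin a ha b hb, hmax a ha b hb, hodd a (hne0 a ha), hSimp a ha b hb⟩⟩,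
    hmaps, hinj, hsurj⟩

theorem stmt0 (n : ℕ) (hn : 1 ≤ n) (S : Set ℤ) (hne : S.Nonempty) (hsub : S ⊆ Zeven n) :
    (Subalg (Zeven n) S ↔
      ∃ U : Set ℤ, U.Nonempty ∧ U ⊆ Set.Icc 1 (n : ℤ) ∧ S = U ∪ (fun x : ℤ => -x) '' U) ∧
    (Subalg (Zeven n) S →
      ∃ U : Set ℤ, U.Nonempty ∧ U ⊆ Set.Icc 1 (n : ℤ) ∧ S = U ∪ (fun x : ℤ => -x) '' U ∧
        S.ncard = 2 * U.ncard ∧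
        ∃ h : ℤ → ℤ, SHom S (Zeven U.ncard) h ∧ Set.BijOn h S (Zeven U.ncard)) ∧
    (Subalg (Zeven n) S → S ≠ Zeven n →
      ∃ m : ℕ, m < n ∧ ∃ h : ℤ → ℤ, SHom S (Zeven m) h ∧ Set.BijOn h S (Zeven m)) := by
  have mk : Subalg (Zeven n) S → ∃ U : Set ℤ, U.Nonempty ∧ U ⊆ Set.Icc 1 (n : ℤ) ∧
      S = U ∪ (fun x : ℤ => -x) '' U := by
    intro hS
    have hneg : ∀ a ∈ S, -a ∈ S := fun a ha => (hS.2.2 a ha a ha).2.2.1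
    refine ⟨{a | a ∈ S ∧ 0 < a}, ?_, ?_, ?_⟩
    · obtain ⟨a, ha⟩ := hne
      have h0 : a ≠ 0 := (hsub ha).2
      rcases lt_or_gt_of_ne h0 with h | h
      · exact ⟨-a, hneg a ha, by omega⟩
      · exact ⟨a, ha, h⟩
    · rintro a ⟨ha, h0⟩
      exact Set.mem_Icc.2 ⟨by omega, (hsub ha).1.2⟩
    · ext a
      simp only [Set.mem_union, Set.mem_setOf_eq, Set.mem_image]
      constructor
      · intro ha
        have h0 : a ≠ 0 := (hsub ha).2
        rcases lt_or_gt_of_ne h0 with h | h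
        · exact Or.inr ⟨-a, ⟨hneg a ha, by omega⟩, by ring⟩
        · exact Or.inl ⟨ha, h⟩
      · rintro (⟨ha, _⟩ | ⟨x, ⟨hx, _⟩, rfl⟩)
        · exact ha
        · exact hneg x hx
  have part2 : Subalg (Zeven n) S →
      ∃ U : Set ℤ, U.Nonempty ∧ U ⊆ Set.Icc 1 (n : ℤ) ∧ S = U ∪ (fun x : ℤ => -x) '' U ∧
        S.ncard = 2 * U.ncard ∧
        ∃ h : ℤ → ℤ, SHom S (Zeven U.ncard) h ∧ Set.BijOn h S (Zeven U.ncard) := by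
    intro hS
    obtain ⟨U, hUne, hUIcc, hSeq⟩ := mk hS
    have hUfin : U.Finite := (Set.finite_Icc _ _).subset hUIcc
    have hpos : ∀ a ∈ U, (1:ℤ) ≤ a := fun a ha => (hUIcc ha).1
    obtain ⟨hhom, hbij⟩ := key U hUfin hpos
    exact ⟨U, hUne, hUIcc, hSeq, by rw [hSeq]; exact ncard_double U hUfin hpos,
      hmap hUfin.toFinset, by rw [hSeq]; exact hhom, by rw [hSeq]; exact hbij⟩
  refine ⟨⟨mk, ?_⟩, part2, ?_⟩
  · rintro ⟨U, hUne, hUIcc, hSeq⟩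
    refine subalg_of_neg_closed hne hsub ?_
    rw [hSeq]
    rintro a (ha | ⟨x, hx, rfl⟩)
    · exact Or.inr ⟨a, ha, rfl⟩
    · simpa using Or.inl hx
  · intro hS hne'
    obtain ⟨U, hUne, hUIcc, hSeq, _, h, hh⟩ := part2 hS
    refine ⟨U.ncard, ?_, h, hh⟩
    by_contra hc
    push_neg at hc
    have hfin : (Set.Icc (1:ℤ) (n : ℤ)).Finite := Set.finite_Icc _ _
    have hUeq : U = Set.Icc 1 (n : ℤ) :=
      Set.eq_of_subset_of_ncard_le hUIcc (by rw [ncard_Icc_one]; omega) hfin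
    exact hne' (by rw [hSeq, hUeq, ← Zeven_eq])
end

section
/- Let n ≥ 1. A nonempty subset S of Z_{2n+1} is a subalgebra of Z_{2n+1} if and only if S = U ∪ (−U) for some nonempty subset U of {0,1,…,n}. Moreover every proper subalgebra S of Z_{2n+1} admits a bijective homomorphism onto Z_{2m} where m = |S|/2 if 0 ∉ S, and onto Z_{2m+1} where m = (|S|−1)/2 if 0 ∈ S; in particular every proper subalgebra of Z_{2n+1} is isomorphic to Z_k for some k < 2n+1. -/
set_option maxHeartbeats 800000


lemma Zodd_eq (n : ℕ) : Zodd n = Set.Icc (-(n : ℤ)) n := rfl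

lemma Zodd_finite (n : ℕ) : (Zodd n).Finite := by
  rw [Zodd_eq]; exact Set.finite_Icc _ _

lemma Zodd_ncard (n : ℕ) : (Zodd n).ncard = 2 * n + 1 := by
  rw [Zodd_eq, Set.ncard_eq_toFinset_card', Set.toFinset_Icc, Int.card_Icc]
  omega

lemma Zeven_eq_s1 (n : ℕ) : Zeven n = Zodd n \ {0} := by
  ext x; simp [Zeven, Zodd]

lemma Zeven_finite (n : ℕ) : (Zeven n).Finite := by
  rw [Zeven_eq_s1]; exact (Zodd_finite n).diff

lemma Zeven_ncard (n : ℕ) : (Zeven n).ncard = 2 * n := by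
  rw [Zeven_eq_s1, Set.ncard_diff_singleton_of_mem
    (by simp [Zodd] : (0:ℤ) ∈ Zodd n), Zodd_ncard]
  omega

/-- Any strictly monotone, negation-commuting map is a homomorphism. -/
lemma hom_of_mono (S T : Set ℤ) (h : ℤ → ℤ)
    (hmaps : Set.MapsTo h S T)
    (hmono : StrictMonoOn h S)
    (hneg : ∀ a ∈ S, -a ∈ S)
    (hhneg : ∀ a, h (-a) = - h a) :
    SHom S T h := by
  refine ⟨hmaps, fun a ha b hb => ?_⟩
  have key : ∀ x ∈ S, ∀ y ∈ S,
      h (min x y) = min (h x) (h y) ∧ h (max x y) = max (h x) (h y) := by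
    intro x hx y hy
    rcases le_total x y with hxy | hxy
    · have := hmono.monotoneOn hx hy hxy
      rw [min_eq_left hxy, max_eq_right hxy, min_eq_left this, max_eq_right this]
      exact ⟨rfl, rfl⟩
    · have := hmono.monotoneOn hy hx hxy
      rw [min_eq_right hxy, max_eq_left hxy, min_eq_right this, max_eq_left this]
      exact ⟨rfl, rfl⟩
  refine ⟨(key a ha b hb).1, (key a ha b hb).2, hhneg a, ?_⟩
  have hiff : a ≤ b ↔ h a ≤ h b := by
    constructor
    · exact fun hab => hmono.monotoneOn ha hb hab
    · intro hab
      by_contra hcon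
      exact absurd (hmono hb ha (not_le.mp hcon)) (not_lt.mpr hab)
  unfold SImp
  by_cases hab : a ≤ b
  · rw [if_pos hab, if_pos (hiff.mp hab), (key (-a) (hneg a ha) b hb).2, hhneg a]
  · rw [if_neg hab, if_neg (fun hc => hab (hiff.mpr hc)),
      (key (-a) (hneg a ha) b hb).1, hhneg a]

/-- The normalizing map on a symmetric finite set `S`. -/
noncomputable def hS (S : Set ℤ) (x : ℤ) : ℤ :=
  Int.sign x * ((S ∩ Set.Icc 1 |x|).ncard : ℤ)

lemma hS_neg (S : Set ℤ) (x : ℤ) : hS S (-x) = - hS S x := by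
  unfold hS
  rw [Int.sign_neg, abs_neg]
  ring

lemma hS_zero (S : Set ℤ) : hS S 0 = 0 := by simp [hS]

lemma hS_of_nonneg (S : Set ℤ) {x : ℤ} (hx : 0 ≤ x) :
    hS S x = ((S ∩ Set.Icc 1 x).ncard : ℤ) := by
  rcases hx.eq_or_lt with h | h
  · rw [← h, hS_zero, Set.Icc_eq_empty (by norm_num), Set.inter_empty,
      Set.ncard_empty, Nat.cast_zero]
  · rw [hS, abs_of_pos h, Int.sign_eq_one_iff_pos.mpr h, one_mul]

lemma hS_pos_lt {S : Set ℤ} (hf : S.Finite) {a b : ℤ} (hb : b ∈ S)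
    (ha : 0 ≤ a) (hab : a < b) : hS S a < hS S b := by
  rw [hS_of_nonneg S ha, hS_of_nonneg S (le_of_lt (lt_of_le_of_lt ha hab))]
  have hss : (S ∩ Set.Icc 1 a) ⊂ (S ∩ Set.Icc 1 b) := by
    refine (Set.ssubset_iff_of_subset
      (Set.inter_subset_inter_right _ (Set.Icc_subset_Icc_right hab.le))).2 ?_
    exact ⟨b, ⟨hb, by constructor <;> omega⟩, fun hc => by
      have := hc.2.2; omega⟩
  exact_mod_cast Set.ncard_lt_ncard hss (hf.inter_of_left _)

lemma hS_neg_lt {S : Set ℤ} (hf : S.Finite) (hneg : ∀ a ∈ S, -a ∈ S)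
    {x : ℤ} (hx : x ∈ S) (hx0 : x < 0) : hS S x < 0 := by
  have h1 : hS S x = - hS S (-x) := by rw [hS_neg, neg_neg]
  have h2 : hS S (-x) = ((S ∩ Set.Icc 1 (-x)).ncard : ℤ) := hS_of_nonneg S (by omega)
  have h3 : 0 < (S ∩ Set.Icc 1 (-x)).ncard := by
    rw [Set.ncard_pos (hf.inter_of_left _)]
    exact ⟨-x, hneg x hx, Set.mem_Icc.mpr ⟨by omega, le_refl _⟩⟩
  omega

lemma hS_mono {S : Set ℤ} (hf : S.Finite) (hneg : ∀ a ∈ S, -a ∈ S) :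
    StrictMonoOn (hS S) S := by
  intro a ha b hb hab
  rcases le_or_gt 0 a with h0a | h0a
  · exact hS_pos_lt hf hb h0a hab
  · rcases le_or_gt 0 b with h0b | h0b
    · calc hS S a < 0 := hS_neg_lt hf hneg ha h0a
        _ ≤ hS S b := by rw [hS_of_nonneg S h0b]; positivity
    · have : hS S (-b) < hS S (-a) :=
        hS_pos_lt hf (hneg a ha) (by omega) (by omega)
      rw [hS_neg, hS_neg] at this
      omega

lemma hS_abs (S : Set ℤ) (x : ℤ) :
    |hS S x| = ((S ∩ Set.Icc 1 |x|).ncard : ℤ) := by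
  rcases lt_trichotomy x 0 with h | h | h
  · rw [hS, Int.sign_eq_neg_one_iff_neg.mpr h, neg_one_mul, abs_neg,
      abs_of_nonneg (by positivity)]
  · subst h
    rw [hS_zero]
    simp [Set.Icc_eq_empty (by norm_num : ¬ (1:ℤ) ≤ |0|)]
  · rw [hS_of_nonneg S h.le, abs_of_nonneg (by positivity), abs_of_pos h]

lemma card_split {S : Set ℤ} (hf : S.Finite) (hneg : ∀ a ∈ S, -a ∈ S) :
    S.ncard = 2 * (S ∩ Set.Ioi 0).ncard + (S ∩ {0}).ncard := by
  have hNP : (S ∩ Set.Iio 0) = (fun x : ℤ => -x) '' (S ∩ Set.Ioi 0) := by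
    ext y
    simp only [Set.mem_inter_iff, Set.mem_Iio, Set.mem_Ioi, Set.mem_image]
    constructor
    · intro ⟨hy, hy0⟩
      exact ⟨-y, ⟨hneg y hy, by omega⟩, by ring⟩
    · rintro ⟨x, ⟨hx, hx0⟩, rfl⟩
      exact ⟨hneg x hx, by omega⟩
  have hcardN : (S ∩ Set.Iio 0).ncard = (S ∩ Set.Ioi 0).ncard := by
    rw [hNP, Set.ncard_image_of_injective _ neg_injective]
  have h1 : (S ∩ Set.Iio 0).ncard + (S \ Set.Iio 0).ncard = S.ncard :=
    Set.ncard_inter_add_ncard_diff_eq_ncard S _ hf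
  have h2 : S \ Set.Iio 0 = (S ∩ Set.Ioi 0) ∪ (S ∩ {0}) := by
    ext x
    simp only [Set.mem_diff, Set.mem_Iio, Set.mem_inter_iff, Set.mem_Ioi,
      Set.mem_union, Set.mem_singleton_iff]
    constructor
    · intro ⟨hx, hx0⟩
      rcases eq_or_lt_of_le (not_lt.mp hx0) with h | h
      · exact Or.inr ⟨hx, h.symm⟩
      · exact Or.inl ⟨hx, h⟩
    · rintro (⟨hx, hx0⟩ | ⟨hx, hx0⟩) <;> exact ⟨hx, by omega⟩
  have h3 : ((S ∩ Set.Ioi 0) ∪ (S ∩ {0})).ncard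
      = (S ∩ Set.Ioi 0).ncard + (S ∩ {0}).ncard := by
    apply Set.ncard_union_eq
    · rw [Set.disjoint_iff]
      rintro x ⟨⟨_, hx1⟩, _, hx2⟩
      simp only [Set.mem_Ioi] at hx1
      simp only [Set.mem_singleton_iff] at hx2
      omega
    · exact hf.inter_of_left _
    · exact hf.inter_of_left _
  rw [h2, h3] at h1
  omega

lemma card_split_mem {S : Set ℤ} (hf : S.Finite) (hneg : ∀ a ∈ S, -a ∈ S)
    (h0 : (0:ℤ) ∈ S) : S.ncard = 2 * (S ∩ Set.Ioi 0).ncard + 1 := by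
  have := card_split hf hneg
  rwa [show S ∩ ({0} : Set ℤ) = {0} from
    Set.inter_eq_self_of_subset_right (by simpa using h0), Set.ncard_singleton] at this

lemma card_split_notmem {S : Set ℤ} (hf : S.Finite) (hneg : ∀ a ∈ S, -a ∈ S)
    (h0 : (0:ℤ) ∉ S) : S.ncard = 2 * (S ∩ Set.Ioi 0).ncard := by
  have := card_split hf hneg
  have he : S ∩ {0} = (∅ : Set ℤ) := by
    apply Set.eq_empty_of_forall_notMem
    rintro x ⟨hx, hx0⟩
    simp only [Set.mem_singleton_iff] at hx0
    exact h0 (hx0 ▸ hx)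
  rw [he, Set.ncard_empty] at this
  omega

theorem stmt1 (n : ℕ) (hn : 1 ≤ n) (S : Set ℤ) (hne : S.Nonempty) (hsub : S ⊆ Zodd n) :
    (Subalg (Zodd n) S ↔
      ∃ U : Set ℤ, U.Nonempty ∧ U ⊆ Set.Icc 0 (n : ℤ) ∧ S = U ∪ (fun x : ℤ => -x) '' U) ∧
    (Subalg (Zodd n) S → S ≠ Zodd n →
      ((0 : ℤ) ∉ S →
        S.ncard / 2 ≤ n ∧
          ∃ h : ℤ → ℤ, SHom S (Zeven (S.ncard / 2)) h ∧
            Set.BijOn h S (Zeven (S.ncard / 2))) ∧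
      ((0 : ℤ) ∈ S →
        (S.ncard - 1) / 2 < n ∧
          ∃ h : ℤ → ℤ, SHom S (Zodd ((S.ncard - 1) / 2)) h ∧
            Set.BijOn h S (Zodd ((S.ncard - 1) / 2)))) := by
  have hf : S.Finite := (Zodd_finite n).subset hsub
  constructor
  · constructor
    · rintro ⟨-, -, hcl⟩
      refine ⟨S ∩ Set.Icc 0 (n : ℤ), ?_, Set.inter_subset_right, ?_⟩
      · obtain ⟨a, ha⟩ := hne
        have hna : -a ∈ S := (hcl a ha a ha).2.2.1
        have habs : max a (-a) ∈ S := (hcl a ha (-a) hna).2.1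
        refine ⟨max a (-a), habs, Set.mem_Icc.mpr ⟨?_, (hsub habs).2⟩⟩
        rcases le_total 0 a with h | h
        · exact le_max_of_le_left h
        · exact le_max_of_le_right (by omega)
      · ext x
        constructor
        · intro hx
          rcases le_or_gt 0 x with h0 | h0
          · exact Or.inl ⟨hx, Set.mem_Icc.mpr ⟨h0, (hsub hx).2⟩⟩
          · refine Or.inr ⟨-x, ⟨(hcl x hx x hx).2.2.1,
              Set.mem_Icc.mpr ⟨by omega, ?_⟩⟩, by ring⟩
            have := (hsub hx).1
            omega
        · rintro (⟨hx, -⟩ | ⟨u, ⟨hu, -⟩, rfl⟩)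
          · exact hx
          · exact (hcl u hu u hu).2.2.1
    · rintro ⟨U, hUne, hUsub, hSU⟩
      have hsym : ∀ a ∈ S, -a ∈ S := by
        rw [hSU]
        rintro a (ha | ⟨u, hu, rfl⟩)
        · exact Set.mem_union_right _ ⟨a, ha, rfl⟩
        · rw [neg_neg]
          exact Set.mem_union_left _ hu
      refine ⟨hne, hsub, fun a ha b hb => ?_⟩
      refine ⟨?_, ?_, hsym a ha, ?_⟩
      · rcases min_choice a b with h | h <;> rw [h] <;> assumption
      · rcases max_choice a b with h | h <;> rw [h] <;> assumption
      · unfold SImp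
        split_ifs
        · rcases max_choice (-a) b with h | h <;> rw [h]
          exacts [hsym a ha, hb]
        · rcases min_choice (-a) b with h | h <;> rw [h]
          exacts [hsym a ha, hb]
  · rintro ⟨-, -, hcl⟩ hprop
    have hneg : ∀ a ∈ S, -a ∈ S := fun a ha => (hcl a ha a ha).2.2.1
    set p := (S ∩ Set.Ioi 0).ncard with hp
    have hpn : p ≤ n := by
      have hsubp : S ∩ Set.Ioi 0 ⊆ Set.Icc (1 : ℤ) n := by
        rintro x ⟨hx, hx0⟩
        simp only [Set.mem_Ioi] at hx0
        exact Set.mem_Icc.mpr ⟨by omega, (hsub hx).2⟩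
      have hle := Set.ncard_le_ncard hsubp (Set.finite_Icc _ _)
      have hIcc : (Set.Icc (1 : ℤ) (n : ℤ)).ncard = n := by
        rw [Set.ncard_eq_toFinset_card', Set.toFinset_Icc, Int.card_Icc]
        omega
      omega
    have hmono := hS_mono hf hneg
    have hinj := hmono.injOn
    have hcards : (hS S '' S).ncard = S.ncard := Set.ncard_image_of_injOn hinj
    have habsle : ∀ x ∈ S, |hS S x| ≤ (p : ℤ) := by
      intro x hx
      rw [hS_abs]
      have hle : (S ∩ Set.Icc 1 |x|).ncard ≤ p := by
        apply Set.ncard_le_ncard _ (hf.inter_of_left _)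
        apply Set.inter_subset_inter_right
        intro y hy
        simp only [Set.mem_Icc] at hy
        simp only [Set.mem_Ioi]
        omega
      exact_mod_cast hle
    constructor
    · intro h0
      have hc : S.ncard = 2 * p := card_split_notmem hf hneg h0
      have hm : S.ncard / 2 = p := by omega
      rw [hm]
      refine ⟨hpn, hS S, ?_⟩
      have hmaps : Set.MapsTo (hS S) S (Zeven p) := by
        intro x hx
        have hne0 : hS S x ≠ 0 := by
          have hx0 : x ≠ 0 := fun h => h0 (h ▸ hx)
          rcases lt_or_gt_of_ne hx0 with h | h
          · exact ne_of_lt (hS_neg_lt hf hneg hx h)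
          · have := hS_pos_lt hf hx (le_refl 0) h
            rw [hS_zero] at this
            omega
        have := abs_le.mp (habsle x hx)
        exact ⟨⟨this.1, this.2⟩, hne0⟩
      have himg : hS S '' S = Zeven p := by
        apply Set.eq_of_subset_of_ncard_le hmaps.image_subset _ (Zeven_finite p)
        rw [hcards, Zeven_ncard]
        omega
      exact ⟨hom_of_mono S _ _ hmaps hmono hneg (hS_neg S), hmaps, hinj, himg.ge⟩
    · intro h0
      have hc : S.ncard = 2 * p + 1 := card_split_mem hf hneg h0
      have hpn' : p < n := by
        have hlt : S.ncard < (Zodd n).ncard :=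
          Set.ncard_lt_ncard (hsub.ssubset_of_ne hprop) (Zodd_finite n)
        rw [Zodd_ncard] at hlt
        omega
      have hm : (S.ncard - 1) / 2 = p := by omega
      rw [hm]
      refine ⟨hpn', hS S, ?_⟩
      have hmaps : Set.MapsTo (hS S) S (Zodd p) := by
        intro x hx
        have := abs_le.mp (habsle x hx)
        exact ⟨this.1, this.2⟩
      have himg : hS S '' S = Zodd p := by
        apply Set.eq_of_subset_of_ncard_le hmaps.image_subset _ (Zodd_finite p)
        rw [hcards, Zodd_ncard]
        omega
      exact ⟨hom_of_mono S _ _ hmaps hmono hneg (hS_neg S), hmaps, hinj, himg.ge⟩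
end

section
/- Let m, n ≥ 1 and let h : Z_{2m} → Z_{2n} be a homomorphism (a map preserving ∧, ∨, ¬ and →). Then h is injective, and consequently m ≤ n. Moreover the only homomorphism from Z_{2n} to Z_{2n} is the identity map. -/
lemma zeven_neg {m : ℕ} {a : ℤ} (ha : a ∈ Zeven m) : -a ∈ Zeven m := by
  simp only [Zeven, Set.mem_setOf_eq] at *; omega

lemma shom_neg {m n : ℕ} {h : ℤ → ℤ} (hh : SHom (Zeven m) (Zeven n) h)
    {a : ℤ} (ha : a ∈ Zeven m) : h (-a) = -h a :=
  (hh.2 a ha a ha).2.2.1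

lemma shom_ne {m n : ℕ} {h : ℤ → ℤ} (hh : SHom (Zeven m) (Zeven n) h)
    {a : ℤ} (ha : a ∈ Zeven m) : h a ≠ 0 := (hh.1 ha).2

lemma shom_le {m n : ℕ} {h : ℤ → ℤ} (hh : SHom (Zeven m) (Zeven n) h)
    {a : ℤ} (ha : a ∈ Zeven m) : -(n : ℤ) ≤ h a ∧ h a ≤ n := (hh.1 ha).1

lemma shom_pos {m n : ℕ} {h : ℤ → ℤ} (hh : SHom (Zeven m) (Zeven n) h)
    {a : ℤ} (ha : a ∈ Zeven m) (h0 : 0 < a) : 0 < h a := by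
  have key := (hh.2 (-a) (zeven_neg ha) a ha).2.1
  rw [max_eq_right (by omega), shom_neg hh ha] at key
  have := shom_ne hh ha
  rcases max_cases (-h a) (h a) with ⟨h1, h2⟩ | ⟨h1, h2⟩ <;> omega

lemma shom_mono {m n : ℕ} {h : ℤ → ℤ} (hh : SHom (Zeven m) (Zeven n) h)
    {a b : ℤ} (ha : a ∈ Zeven m) (hb : b ∈ Zeven m) (hab : a ≤ b) :
    h a ≤ h b := by
  have key := (hh.2 a ha b hb).2.1
  rw [max_eq_right hab] at key
  rcases max_cases (h a) (h b) with ⟨h1, h2⟩ | ⟨h1, h2⟩ <;> omega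

lemma shom_abs {m n : ℕ} {h : ℤ → ℤ} (hh : SHom (Zeven m) (Zeven n) h)
    {a : ℤ} (ha : a ∈ Zeven m) : h |a| = |h a| := by
  have key := (hh.2 a ha (-a) (zeven_neg ha)).2.1
  rw [shom_neg hh ha] at key
  rw [abs_eq_max_neg, key, abs_eq_max_neg]

/-- No two distinct positive elements have the same image. -/
lemma shom_pos_ne {m n : ℕ} {h : ℤ → ℤ} (hh : SHom (Zeven m) (Zeven n) h)
    {p q : ℤ} (hp : p ∈ Zeven m) (hq : q ∈ Zeven m) (hp0 : 0 < p)
    (hpq : p < q) (heq : h p = h q) : False := by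
  have hq0 : 0 < q := lt_trans hp0 hpq
  have hcpos : 0 < h p := shom_pos hh hp hp0
  have key := (hh.2 q hq p hp).2.2.2
  have h1 : SImp q p = -q := by
    simp only [SImp, if_neg (not_le.mpr hpq)]
    exact min_eq_left (by omega)
  have h2 : SImp (h q) (h p) = h p := by
    rw [← heq]
    simp only [SImp, le_refl, if_pos]
    exact max_eq_right (by omega)
  rw [h1, h2, shom_neg hh hq, ← heq] at key
  omega

lemma shom_injOn {m n : ℕ} {h : ℤ → ℤ} (hh : SHom (Zeven m) (Zeven n) h) :
    Set.InjOn h (Zeven m) := by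
  have key : ∀ a ∈ Zeven m, ∀ b ∈ Zeven m, a < b → h a ≠ h b := by
    intro a ha b hb hlt heq
    by_cases hba : b = -a
    · subst hba
      rw [shom_neg hh ha] at heq
      have := shom_ne hh ha
      omega
    · -- |a| ≠ |b|, both positive, equal images
      have habs : h |a| = h |b| := by rw [shom_abs hh ha, shom_abs hh hb, heq]
      have hamem : |a| ∈ Zeven m := by
        simp only [Zeven, Set.mem_setOf_eq] at *
        rcases abs_cases a with ⟨h1, h2⟩ | ⟨h1, h2⟩ <;> omega
      have hbmem : |b| ∈ Zeven m := by
        simp only [Zeven, Set.mem_setOf_eq] at *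
        rcases abs_cases b with ⟨h1, h2⟩ | ⟨h1, h2⟩ <;> omega
      have ha0 : a ≠ 0 := ha.2
      have hb0 : b ≠ 0 := hb.2
      have habs0 : 0 < |a| := abs_pos.mpr ha.2
      have hbabs0 : 0 < |b| := abs_pos.mpr hb.2
      have hne : |a| ≠ |b| := by
        rcases abs_cases a with ⟨h1, h2⟩ | ⟨h1, h2⟩ <;>
          rcases abs_cases b with ⟨h3, h4⟩ | ⟨h3, h4⟩ <;> omega
      rcases lt_or_gt_of_ne hne with hlt2 | hlt2
      · exact shom_pos_ne hh hamem hbmem habs0 hlt2 habs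
      · exact shom_pos_ne hh hbmem hamem hbabs0 hlt2 habs.symm
  intro a ha b hb heq
  rcases lt_trichotomy a b with hlt | heq2 | hlt
  · exact absurd heq (key a ha b hb hlt)
  · exact heq2
  · exact absurd heq.symm (key b hb a ha hlt)

lemma shom_step {m n : ℕ} {h : ℤ → ℤ} (hh : SHom (Zeven m) (Zeven n) h)
    {a : ℤ} (h0 : 0 < a) (hup : a + 1 ≤ m) : h a + 1 ≤ h (a + 1) := by
  have ha : a ∈ Zeven m := ⟨⟨by omega, by omega⟩, by omega⟩
  have ha1 : a + 1 ∈ Zeven m := ⟨⟨by omega, by omega⟩, by omega⟩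
  have hle := shom_mono hh ha ha1 (by omega)
  have hne : h a ≠ h (a + 1) := by
    intro heq
    exact shom_pos_ne hh ha ha1 h0 (by omega) heq
  omega

lemma shom_lower {m n : ℕ} {h : ℤ → ℤ} (hh : SHom (Zeven m) (Zeven n) h) :
    ∀ j : ℕ, ∀ a : ℤ, 0 < a → a + j ≤ m → h a + j ≤ h (a + j) := by
  intro j
  induction j with
  | zero => intro a _ _; simp
  | succ j ih =>
    intro a h0 hup
    push_cast at hup ⊢
    have h1 : h a + j ≤ h (a + j) := by
      have := ih a h0 (by omega); push_cast at this; omega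
    have h2 : h (a + j) + 1 ≤ h (a + j + 1) := by
      have := shom_step hh (a := a + j) (by omega) (by omega)
      omega
    have : a + (j : ℤ) + 1 = a + ((j : ℤ) + 1) := by ring
    rw [this] at h2
    omega

lemma shom_one_le {m n : ℕ} {h : ℤ → ℤ} (hh : SHom (Zeven m) (Zeven n) h)
    (hm : 1 ≤ m) : 1 ≤ h 1 := by
  have h1 : (1 : ℤ) ∈ Zeven m := ⟨⟨by omega, by exact_mod_cast hm⟩, by omega⟩
  have := shom_pos hh h1 one_pos
  omega

theorem stmt2 (m n : ℕ) (hm : 1 ≤ m) (hn : 1 ≤ n) (h : ℤ → ℤ)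
    (hh : SHom (Zeven m) (Zeven n) h) :
    Set.InjOn h (Zeven m) ∧ m ≤ n ∧
      ∀ e : ℤ → ℤ, SHom (Zeven n) (Zeven n) e → Set.EqOn e id (Zeven n) := by
  refine ⟨shom_injOn hh, ?_, ?_⟩
  · -- m ≤ n
    have hlow := shom_lower hh (m - 1) 1 one_pos (by omega)
    have hcast : (1 : ℤ) + ((m - 1 : ℕ) : ℤ) = (m : ℤ) := by omega
    rw [hcast] at hlow
    have h1 := shom_one_le hh hm
    have hmmem : (m : ℤ) ∈ Zeven m := ⟨⟨by omega, le_refl _⟩, by omega⟩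
    have hub := (shom_le hh hmmem).2
    omega
  · -- identity
    intro e he
    have hpos : ∀ a : ℤ, 0 < a → a ≤ n → e a = a := by
      intro a h0 hub
      -- a ≤ e a
      have hlow1 := shom_lower he (a - 1).toNat 1 one_pos (by omega)
      have hc1 : (1 : ℤ) + ((a - 1).toNat : ℤ) = a := by omega
      rw [hc1] at hlow1
      have h1 := shom_one_le he hn
      -- e a ≤ a
      have hlow2 := shom_lower he (n - a).toNat a h0 (by omega)
      have hc2 : a + ((n - a).toNat : ℤ) = (n : ℤ) := by omega
      rw [hc2] at hlow2
      have hnmem : (n : ℤ) ∈ Zeven n := ⟨⟨by omega, le_refl _⟩, by omega⟩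
      have hub2 := (shom_le he hnmem).2
      omega
    intro a ha
    simp only [id_eq]
    rcases lt_or_gt_of_ne ha.2 with h0 | h0
    · have hna : (0 : ℤ) < -a := by omega
      have := hpos (-a) hna (by have := ha.1.1; omega)
      have hneg := shom_neg he (zeven_neg ha)
      rw [neg_neg] at hneg
      omega
    · exact hpos a h0 ha.1.2
end

section
/- Let m ≥ 1, k ≥ 1 and let h : Z_{2m+1} → Z_k be a homomorphism. Then k is odd, h(0) = 0, and whenever a ≠ b in Z_{2m+1} satisfy h(a) = h(b) one has h(a) = 0. Moreover two homomorphisms h₁, h₂ : Z_{2m+1} → Z_{2m+1} are equal if and only if their images coincide, and the assignment h ↦ image(h) is a bijection from the set of homomorphisms Z_{2m+1} → Z_{2m+1} onto the set of subalgebras of Z_{2m+1} that contain 0. -/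
/-- The universe of the Sugihara algebra `Z_k` for general `k ≥ 1`. -/
def ZS (k : ℕ) : Set ℤ := if k % 2 = 1 then Zodd (k / 2) else Zeven (k / 2)

namespace SugAux

lemma mem_zodd {m : ℕ} {a : ℤ} : a ∈ Zodd m ↔ -(m : ℤ) ≤ a ∧ a ≤ m := Iff.rfl

lemma zodd_zero {m : ℕ} : (0 : ℤ) ∈ Zodd m := by
  simp only [mem_zodd]; omega

lemma zodd_neg {m : ℕ} {a : ℤ} (h : a ∈ Zodd m) : -a ∈ Zodd m := by
  simp only [mem_zodd] at *; omega

lemma zodd_min {m : ℕ} {a b : ℤ} (ha : a ∈ Zodd m) (hb : b ∈ Zodd m) :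
    min a b ∈ Zodd m := by simp only [mem_zodd] at *; omega

lemma zodd_max {m : ℕ} {a b : ℤ} (ha : a ∈ Zodd m) (hb : b ∈ Zodd m) :
    max a b ∈ Zodd m := by simp only [mem_zodd] at *; omega

lemma zodd_simp {m : ℕ} {a b : ℤ} (ha : a ∈ Zodd m) (hb : b ∈ Zodd m) :
    SImp a b ∈ Zodd m := by
  simp only [mem_zodd] at *; unfold SImp; split <;> omega

variable {m : ℕ} {T : Set ℤ} {h : ℤ → ℤ}

lemma hom_zero (hh : SHom (Zodd m) T h) : h 0 = 0 := by
  have := (hh.2 0 zodd_zero 0 zodd_zero).2.2.1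
  rw [neg_zero] at this; omega

lemma hom_mono (hh : SHom (Zodd m) T h) {a b : ℤ} (ha : a ∈ Zodd m) (hb : b ∈ Zodd m)
    (hab : a ≤ b) : h a ≤ h b := by
  have := (hh.2 a ha b hb).2.1
  rw [max_eq_right hab] at this; omega

lemma hom_pinj (hh : SHom (Zodd m) T h) {a b : ℤ} (ha : a ∈ Zodd m) (hb : b ∈ Zodd m)
    (hne : a ≠ b) (heq : h a = h b) : h a = 0 := by
  -- WLOG a < b
  wlog hab : a < b generalizing a b
  · exact heq ▸ this hb ha (Ne.symm hne) heq.symm (by omega)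
  have h1 := (hh.2 a ha b hb).2.2.2
  have h2 := (hh.2 b hb a ha).2.2.2
  have hx : max (-a) b ∈ Zodd m := zodd_max (zodd_neg ha) hb
  have h3 := (hh.2 (max (-a) b) hx (max (-a) b) hx).2.2.1
  rw [show SImp a b = max (-a) b from if_pos hab.le] at h1
  rw [show SImp b a = min (-b) a from if_neg (by omega)] at h2
  rw [show -(max (-a) b) = min (-b) a by omega] at h3
  rw [heq] at h1
  rw [heq] at h2
  rw [show SImp (h b) (h b) = max (-(h b)) (h b) from if_pos le_rfl] at h1 h2
  omega

lemma hom_odd (hh : SHom (Zodd m) T h) {a : ℤ} (ha : a ∈ Zodd m) : h (-a) = -h a :=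
  (hh.2 a ha a ha).2.2.1

lemma hom_nonneg (hh : SHom (Zodd m) T h) {a : ℤ} (ha : a ∈ Zodd m) (h0 : 0 ≤ a) :
    0 ≤ h a := by
  have := hom_mono hh zodd_zero ha h0
  rw [hom_zero hh] at this; exact this


lemma step_le {h₁ h₂ : ℤ → ℤ} (hh1 : SHom (Zodd m) (Zodd m) h₁)
    (hh2 : SHom (Zodd m) (Zodd m) h₂) (him : h₁ '' Zodd m ⊆ h₂ '' Zodd m)
    {a : ℤ} (ha : a ∈ Zodd m) (ha1 : a + 1 ∈ Zodd m)
    (heq : h₁ (a + 1) = h₂ (a + 1)) (hpos : 0 < h₁ (a + 1)) : h₁ a ≤ h₂ a := by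
  obtain ⟨c, hc, hch⟩ := him (Set.mem_image_of_mem h₁ ha)
  have hle : h₁ a ≤ h₁ (a + 1) := hom_mono hh1 ha ha1 (by omega)
  have hlt : h₁ a < h₁ (a + 1) := by
    rcases lt_or_eq_of_le hle with h' | h'
    · exact h'
    · have := hom_pinj hh1 ha ha1 (by omega) h'
      omega
  have hc2 : h₂ c < h₂ (a + 1) := by rw [hch]; omega
  have hca : c ≤ a := by
    by_contra hca
    have : h₂ (a + 1) ≤ h₂ c := hom_mono hh2 ha1 hc (by omega)
    omega
  have : h₂ c ≤ h₂ a := hom_mono hh2 hc ha hca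
  omega

lemma eqOn_of_image_eq {h₁ h₂ : ℤ → ℤ} (hh1 : SHom (Zodd m) (Zodd m) h₁)
    (hh2 : SHom (Zodd m) (Zodd m) h₂) (him : h₁ '' Zodd m = h₂ '' Zodd m) :
    Set.EqOn h₁ h₂ (Zodd m) := by
  have hmm : (m : ℤ) ∈ Zodd m := by simp only [mem_zodd]; omega
  have key : ∀ j : ℕ, j ≤ m → h₁ ((m : ℤ) - j) = h₂ ((m : ℤ) - j) := by
    intro j
    induction j with
    | zero =>
      intro _
      simp only [Nat.cast_zero, sub_zero]
      obtain ⟨c, hc, hch⟩ := him ▸ Set.mem_image_of_mem h₁ hmm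
      obtain ⟨d, hd, hdh⟩ := him.symm ▸ Set.mem_image_of_mem h₂ hmm
      have h1 : h₁ (m : ℤ) ≤ h₂ (m : ℤ) := by
        rw [← hch]; exact hom_mono hh2 hc hmm hc.2
      have h2 : h₂ (m : ℤ) ≤ h₁ (m : ℤ) := by
        rw [← hdh]; exact hom_mono hh1 hd hmm hd.2
      omega
    | succ j ih =>
      intro hj
      have hprev := ih (by omega)
      have ha : (m : ℤ) - (j + 1 : ℕ) ∈ Zodd m := by simp only [mem_zodd]; push_cast; omega
      have ha1 : (m : ℤ) - (j + 1 : ℕ) + 1 ∈ Zodd m := by simp only [mem_zodd]; push_cast; omega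
      have hprev' : h₁ ((m : ℤ) - (j + 1 : ℕ) + 1) = h₂ ((m : ℤ) - (j + 1 : ℕ) + 1) := by
        have e1 : (m : ℤ) - (j + 1 : ℕ) + 1 = (m : ℤ) - j := by push_cast; ring
        rw [e1]; exact hprev
      rcases lt_or_ge 0 (h₁ ((m : ℤ) - (j + 1 : ℕ) + 1)) with hpos | hnp
      · have hpos' : 0 < h₂ ((m : ℤ) - (j + 1 : ℕ) + 1) := hprev' ▸ hpos
        have l1 := step_le hh1 hh2 him.le ha ha1 hprev' hpos
        have l2 := step_le hh2 hh1 him.ge ha ha1 hprev'.symm hpos'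
        omega
      · have hz : h₁ ((m : ℤ) - (j + 1 : ℕ) + 1) = 0 := by
          have := hom_nonneg hh1 ha1 (by push_cast; omega)
          omega
        have hz2 : h₂ ((m : ℤ) - (j + 1 : ℕ) + 1) = 0 := hprev' ▸ hz
        have b1 : h₁ ((m : ℤ) - (j + 1 : ℕ)) ≤ h₁ ((m : ℤ) - (j + 1 : ℕ) + 1) :=
          hom_mono hh1 ha ha1 (by omega)
        have b2 : h₂ ((m : ℤ) - (j + 1 : ℕ)) ≤ h₂ ((m : ℤ) - (j + 1 : ℕ) + 1) :=
          hom_mono hh2 ha ha1 (by omega)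
        have c1 := hom_nonneg hh1 ha (by push_cast; omega)
        have c2 := hom_nonneg hh2 ha (by push_cast; omega)
        omega
  intro a ha
  rcases le_or_gt 0 a with h0a | h0a
  · have hj : ((m : ℤ) - a).toNat ≤ m := by omega
    have he : (m : ℤ) - (((m : ℤ) - a).toNat : ℤ) = a := by
      have := ha.2; omega
    have := key ((m : ℤ) - a).toNat hj
    rwa [he] at this
  · have hna : -a ∈ Zodd m := zodd_neg ha
    have hj : ((m : ℤ) - (-a)).toNat ≤ m := by
      have := ha.1; omega
    have he : (m : ℤ) - ((((m : ℤ) - (-a)).toNat : ℤ)) = -a := by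
      have := ha.1; omega
    have hv := key ((m : ℤ) - (-a)).toNat hj
    rw [he] at hv
    have o1 := hom_odd hh1 hna
    have o2 := hom_odd hh2 hna
    rw [neg_neg] at o1 o2
    show h₁ a = h₂ a
    omega


/-- descending enumeration of a subalgebra's positive part -/
noncomputable def gseq (T : Set ℤ) : ℕ → ℤ
  | 0 => sSup T
  | j + 1 => if gseq T j ≤ 0 then 0 else sSup {t ∈ T | t < gseq T j}

noncomputable def emap (T : Set ℤ) (m : ℕ) (a : ℤ) : ℤ :=
  if 0 ≤ a then gseq T ((m : ℤ) - a).toNat else -gseq T ((m : ℤ) + a).toNat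

section Gseq

variable {m : ℕ} {T : Set ℤ} (hfin : T.Finite) (h0T : (0 : ℤ) ∈ T)

include hfin h0T

lemma g_mem : ∀ j, gseq T j ∈ T := by
  intro j
  induction j with
  | zero => exact (Set.nonempty_of_mem h0T).csSup_mem hfin
  | succ j _ =>
    rw [gseq]
    split
    · exact h0T
    · next hne =>
      have hne' : {t ∈ T | t < gseq T j}.Nonempty := ⟨0, h0T, by omega⟩
      exact (hne'.csSup_mem (hfin.subset (Set.sep_subset _ _))).1

lemma g_nonneg : ∀ j, 0 ≤ gseq T j := by
  intro j
  cases j with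
  | zero => exact le_csSup hfin.bddAbove h0T
  | succ j =>
    rw [gseq]
    split
    · exact le_rfl
    · next hne =>
      exact le_csSup (hfin.subset (Set.sep_subset _ _)).bddAbove ⟨h0T, by omega⟩

lemma g_anti : ∀ j, gseq T (j + 1) ≤ gseq T j := by
  intro j
  rw [gseq]
  split
  · next hle => have := g_nonneg hfin h0T j; omega
  · next hne =>
    exact csSup_le ⟨0, h0T, by omega⟩ (fun t ht => ht.2.le)

lemma g_anti' : ∀ {i j : ℕ}, i ≤ j → gseq T j ≤ gseq T i := by
  intro i j hij
  induction j with
  | zero =>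
    have : i = 0 := by omega
    rw [this]
  | succ j ih =>
    rcases Nat.lt_or_ge i (j + 1) with h' | h'
    · exact le_trans (g_anti hfin h0T j) (ih (by omega))
    · have : i = j + 1 := by omega
      rw [this]

lemma g_strict : ∀ j, 0 < gseq T (j + 1) → gseq T (j + 1) < gseq T j := by
  intro j hpos
  rw [gseq] at hpos ⊢
  split at hpos
  · omega
  · next hne =>
    rw [if_neg hne]
    have hne' : {t ∈ T | t < gseq T j}.Nonempty := ⟨0, h0T, by omega⟩
    have : sSup {t ∈ T | t < gseq T j} ∈ {t ∈ T | t < gseq T j} :=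
      hne'.csSup_mem (hfin.subset (Set.sep_subset _ _))
    exact this.2

lemma g_inj : ∀ {i j : ℕ}, i < j → gseq T i = gseq T j → gseq T i = 0 := by
  intro i j hij heq
  by_contra hne
  have hpos : 0 < gseq T j := by
    have := g_nonneg hfin h0T i; omega
  have h1 : 0 < gseq T (i + 1) :=
    lt_of_lt_of_le hpos (g_anti' hfin h0T (by omega))
  have h2 : gseq T (i + 1) < gseq T i := g_strict hfin h0T i h1
  have h3 : gseq T j ≤ gseq T (i + 1) := g_anti' hfin h0T (by omega)
  omega

variable (hsub : T ⊆ Zodd m)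
include hsub

lemma g_bound : ∀ j, 0 < gseq T j → gseq T j ≤ (m : ℤ) - j := by
  intro j
  induction j with
  | zero =>
    intro _
    have := hsub (g_mem hfin h0T 0)
    simpa using this.2
  | succ j ih =>
    intro hpos
    have hjp : 0 < gseq T j := lt_of_lt_of_le hpos (g_anti hfin h0T j)
    have h2 := g_strict hfin h0T j hpos
    have := ih hjp
    push_cast
    omega

lemma g_m_zero : gseq T m = 0 := by
  have h1 := g_nonneg hfin h0T m
  rcases lt_or_eq_of_le h1 with h' | h'
  · have := g_bound hfin h0T hsub m h'
    omega
  · omega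

lemma g_surj : ∀ t ∈ T, 0 < t → ∃ j, gseq T j = t := by
  suffices H : ∀ n : ℕ, ∀ t ∈ T, 0 < t → (m : ℤ) - t ≤ n → ∃ j, gseq T j = t by
    intro t ht hpos
    exact H ((m : ℤ) - t).toNat t ht hpos (by omega)
  intro n
  induction n with
  | zero =>
    intro t ht hpos hbd
    refine ⟨0, ?_⟩
    have htm : t ≤ (m : ℤ) := (hsub ht).2
    have h1 : sSup T ≤ t := csSup_le (Set.nonempty_of_mem h0T) (fun u hu => by
      have := (hsub hu).2; omega)
    have h2 : t ≤ sSup T := le_csSup hfin.bddAbove ht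
    rw [gseq]; omega
  | succ n ih =>
    intro t ht hpos hbd
    by_cases hmax : sSup T = t
    · exact ⟨0, by rw [gseq]; exact hmax⟩
    · have h2 : t < sSup T := lt_of_le_of_ne (le_csSup hfin.bddAbove ht) (Ne.symm hmax)
      set S := {s ∈ T | t < s} with hS
      have hSne : S.Nonempty := ⟨sSup T, Set.Nonempty.csSup_mem ⟨0, h0T⟩ hfin, h2⟩
      have hSfin : S.Finite := hfin.subset (Set.sep_subset _ _)
      have hs0 : sInf S ∈ S := Set.Nonempty.csInf_mem hSne hSfin
      obtain ⟨j, hj⟩ := ih (sInf S) hs0.1 (by have := hs0.2; omega) (by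
        have h3 := hs0.2
        have := (hsub hs0.1).2
        omega)
      refine ⟨j + 1, ?_⟩
      rw [gseq, hj, if_neg (by have := hs0.2; omega)]
      apply le_antisymm
      · refine csSup_le ⟨t, ht, hs0.2⟩ ?_
        intro u hu
        by_contra hut
        have huS : u ∈ S := ⟨hu.1, by omega⟩
        have := csInf_le hSfin.bddBelow huS
        have := hu.2
        omega
      · exact le_csSup (hfin.subset (Set.sep_subset _ _)).bddAbove ⟨ht, hs0.2⟩

end Gseq


section Emap

variable {m : ℕ} {T : Set ℤ} (hfin : T.Finite) (h0T : (0 : ℤ) ∈ T)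
  (hsub : T ⊆ Zodd m) (hneg : ∀ t ∈ T, -t ∈ T)

include hfin h0T hsub in
lemma e_odd : ∀ a : ℤ, emap T m (-a) = -emap T m a := by
  intro a
  unfold emap
  rcases lt_trichotomy a 0 with h | h | h
  · rw [if_pos (by omega), if_neg (by omega), neg_neg]
    congr 1
    omega
  · subst h
    rw [neg_zero, if_pos le_rfl]
    have : ((m : ℤ) - 0).toNat = m := by omega
    rw [this, g_m_zero hfin h0T hsub, neg_zero]
  · rw [if_neg (by omega), if_pos h.le]
    congr 2

include hfin h0T hneg in
lemma e_mem : ∀ a : ℤ, emap T m a ∈ T := by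
  intro a
  unfold emap
  split
  · exact g_mem hfin h0T _
  · exact hneg _ (g_mem hfin h0T _)

include hfin h0T in
lemma e_mono : ∀ a ∈ Zodd m, ∀ b ∈ Zodd m, a ≤ b → emap T m a ≤ emap T m b := by
  intro a ha b hb hab
  unfold emap
  rcases le_or_gt 0 a with h0a | h0a
  · rw [if_pos h0a, if_pos (by omega)]
    exact g_anti' hfin h0T (by omega)
  · rcases le_or_gt 0 b with h0b | h0b
    · rw [if_neg (by omega), if_pos h0b]
      have h1 := g_nonneg hfin h0T ((m : ℤ) + a).toNat
      have h2 := g_nonneg hfin h0T ((m : ℤ) - b).toNat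
      omega
    · rw [if_neg (by omega), if_neg (by omega)]
      have : gseq T ((m : ℤ) + b).toNat ≤ gseq T ((m : ℤ) + a).toNat :=
        g_anti' hfin h0T (by omega)
      omega

include hfin h0T in
lemma e_pinj : ∀ a ∈ Zodd m, ∀ b ∈ Zodd m, a ≠ b → emap T m a = emap T m b →
    emap T m a = 0 := by
  have core : ∀ a ∈ Zodd m, ∀ b ∈ Zodd m, a < b → emap T m a = emap T m b →
      emap T m a = 0 := by
    intro a ha b hb hab heq
    rcases le_or_gt 0 a with h0a | h0a
    · have h0b : 0 ≤ b := by omega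
      rw [emap, if_pos h0a] at heq ⊢
      rw [emap, if_pos h0b] at heq
      have hlt : ((m : ℤ) - b).toNat < ((m : ℤ) - a).toNat := by
        have := hb.2; omega
      have := g_inj hfin h0T hlt heq.symm
      omega
    · rcases le_or_gt 0 b with h0b | h0b
      · rw [emap, if_neg (by omega)] at heq ⊢
        rw [emap, if_pos h0b] at heq
        have h1 := g_nonneg hfin h0T ((m : ℤ) + a).toNat
        have h2 := g_nonneg hfin h0T ((m : ℤ) - b).toNat
        omega
      · rw [emap, if_neg (by omega)] at heq ⊢
        rw [emap, if_neg (by omega)] at heq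
        have hlt : ((m : ℤ) + a).toNat < ((m : ℤ) + b).toNat := by
          have := ha.1; omega
        have := g_inj hfin h0T hlt (by omega)
        omega
  intro a ha b hb hne heq
  rcases lt_or_gt_of_ne hne with h | h
  · exact core a ha b hb h heq
  · have := core b hb a ha h heq.symm
    omega

include hfin h0T hsub hneg in
lemma e_image : emap T m '' Zodd m = T := by
  apply Set.Subset.antisymm
  · rintro _ ⟨a, _, rfl⟩
    exact e_mem hfin h0T hneg a
  · intro t ht
    rcases lt_trichotomy t 0 with h | h | h
    · have hnt : -t ∈ T := hneg t ht
      obtain ⟨j, hj⟩ := g_surj hfin h0T hsub (-t) hnt (by omega)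
      have hb := g_bound hfin h0T hsub j (by omega)
      refine ⟨-((m : ℤ) - j), ?_, ?_⟩
      · simp only [mem_zodd]; omega
      · rw [e_odd hfin h0T hsub]
        rw [emap, if_pos (by omega)]
        have : ((m : ℤ) - ((m : ℤ) - j)).toNat = j := by omega
        rw [this, hj]
        omega
    · exact ⟨0, zodd_zero, by
        have := e_odd hfin h0T hsub 0
        rw [neg_zero] at this
        omega⟩
    · obtain ⟨j, hj⟩ := g_surj hfin h0T hsub t ht h
      have hb := g_bound hfin h0T hsub j (by omega)
      refine ⟨(m : ℤ) - j, ?_, ?_⟩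
      · simp only [mem_zodd]; omega
      · rw [emap, if_pos (by omega)]
        have : ((m : ℤ) - ((m : ℤ) - j)).toNat = j := by omega
        rw [this, hj]

end Emap

lemma mkHom {m : ℕ} {e : ℤ → ℤ}
    (hmap : ∀ a ∈ Zodd m, e a ∈ Zodd m)
    (hmono : ∀ a ∈ Zodd m, ∀ b ∈ Zodd m, a ≤ b → e a ≤ e b)
    (hodd : ∀ a ∈ Zodd m, e (-a) = -e a)
    (hpinj : ∀ a ∈ Zodd m, ∀ b ∈ Zodd m, a ≠ b → e a = e b → e a = 0) :
    SHom (Zodd m) (Zodd m) e := by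
  have hmin : ∀ x ∈ Zodd m, ∀ y ∈ Zodd m, e (min x y) = min (e x) (e y) := by
    intro x hx y hy
    rcases le_total x y with h' | h'
    · rw [min_eq_left h', min_eq_left (hmono x hx y hy h')]
    · rw [min_eq_right h', min_eq_right (hmono y hy x hx h')]
  have hmax : ∀ x ∈ Zodd m, ∀ y ∈ Zodd m, e (max x y) = max (e x) (e y) := by
    intro x hx y hy
    rcases le_total x y with h' | h'
    · rw [max_eq_right h', max_eq_right (hmono x hx y hy h')]
    · rw [max_eq_left h', max_eq_left (hmono y hy x hx h')]
  refine ⟨fun a ha => hmap a ha, fun a ha b hb => ⟨hmin a ha b hb, hmax a ha b hb,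
    hodd a ha, ?_⟩⟩
  have hna := zodd_neg ha
  by_cases hab : a ≤ b
  · rw [show SImp a b = max (-a) b from if_pos hab,
      show SImp (e a) (e b) = max (-(e a)) (e b) from if_pos (hmono a ha b hb hab),
      hmax _ hna _ hb, hodd a ha]
  · rw [show SImp a b = min (-a) b from if_neg hab]
    rcases eq_or_lt_of_le (hmono b hb a ha (by omega)) with heq | hlt
    · have hz : e b = 0 := hpinj b hb a ha (by omega) heq
      have hz2 : e a = 0 := by omega
      rw [hmin _ hna _ hb, hodd a ha, hz, hz2]
      norm_num [SImp]
    · rw [show SImp (e a) (e b) = min (-(e a)) (e b) from if_neg (by omega),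
        hmin _ hna _ hb, hodd a ha]

end SugAux

theorem stmt3 (m k : ℕ) (hm : 1 ≤ m) (hk : 1 ≤ k) (h : ℤ → ℤ)
    (hh : SHom (Zodd m) (ZS k) h) :
    Odd k ∧ h 0 = 0 ∧
      (∀ a ∈ Zodd m, ∀ b ∈ Zodd m, a ≠ b → h a = h b → h a = 0) ∧
      (∀ h₁ h₂ : ℤ → ℤ, SHom (Zodd m) (Zodd m) h₁ → SHom (Zodd m) (Zodd m) h₂ →
        (Set.EqOn h₁ h₂ (Zodd m) ↔ h₁ '' Zodd m = h₂ '' Zodd m)) ∧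
      (∀ e : ℤ → ℤ, SHom (Zodd m) (Zodd m) e →
        Subalg (Zodd m) (e '' Zodd m) ∧ (0 : ℤ) ∈ e '' Zodd m) ∧
      (∀ T : Set ℤ, Subalg (Zodd m) T → (0 : ℤ) ∈ T →
        ∃ e : ℤ → ℤ, SHom (Zodd m) (Zodd m) e ∧ e '' Zodd m = T) := by
  open SugAux in
  refine ⟨?_, hom_zero hh, fun a ha b hb => hom_pinj hh ha hb, ?_, ?_, ?_⟩
  · have h0 : h 0 ∈ ZS k := hh.1 zodd_zero
    rw [hom_zero hh] at h0
    rcases Nat.even_or_odd k with he | ho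
    · exfalso
      unfold ZS at h0
      rw [if_neg (by rw [Nat.even_iff] at he; omega)] at h0
      exact h0.2 rfl
    · exact ho
  · intro h₁ h₂ hh1 hh2
    exact ⟨fun he => he.image_eq, fun him => eqOn_of_image_eq hh1 hh2 him⟩
  · intro e he
    refine ⟨⟨⟨e 0, Set.mem_image_of_mem e zodd_zero⟩, ?_, ?_⟩, ⟨0, zodd_zero, hom_zero he⟩⟩
    · rintro _ ⟨a, ha, rfl⟩
      exact he.1 ha
    · rintro _ ⟨a, ha, rfl⟩ _ ⟨b, hb, rfl⟩
      obtain ⟨p1, p2, p3, p4⟩ := he.2 a ha b hb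
      exact ⟨⟨min a b, zodd_min ha hb, p1⟩, ⟨max a b, zodd_max ha hb, p2⟩,
        ⟨-a, zodd_neg ha, p3⟩, ⟨SImp a b, zodd_simp ha hb, p4⟩⟩
  · intro T hT h0T
    have hsub := hT.2.1
    have hfin : T.Finite := (Set.finite_Icc (-(m : ℤ)) m).subset (fun t ht => by
      have := hsub ht
      simpa [Set.mem_Icc, SugAux.mem_zodd] using this)
    have hneg : ∀ t ∈ T, -t ∈ T := fun t ht => (hT.2.2 t ht t ht).2.2.1
    exact ⟨emap T m,
      mkHom (fun a _ => hsub (e_mem hfin h0T hneg a)) (e_mono hfin h0T)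
        (fun a _ => e_odd hfin h0T hsub a) (e_pinj hfin h0T),
      e_image hfin h0T hsub hneg⟩
end

section
/- Let n ≥ 1 and let k ∈ {2n, 2n+1}. An equivalence relation θ on Z_k is compatible with the Sugihara operations (meaning: a θ b and c θ d imply (a ∧ c) θ (b ∧ d), (a ∨ c) θ (b ∨ d), (¬a) θ (¬b) and (a → c) θ (b → d)) if and only if θ = ≈_m for some m with 0 ≤ m ≤ n. In particular the compatible equivalence relations on Z_k form the chain ≈_0 ⊆ ≈_1 ⊆ … ⊆ ≈_n, where ≈_0 is the diagonal relation and ≈_n = Z_k × Z_k. -/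
/-- The relation `≈_m`. -/
def eqm (m : ℕ) (a b : ℤ) : Prop := a = b ∨ (|a| ≤ (m : ℤ) ∧ |b| ≤ (m : ℤ))

/-- `r` is an equivalence relation on `Z` compatible with the Sugihara operations. -/
def Compatible (Z : Set ℤ) (r : ℤ → ℤ → Prop) : Prop :=
  (∀ a ∈ Z, r a a) ∧ (∀ a ∈ Z, ∀ b ∈ Z, r a b → r b a) ∧
    (∀ a ∈ Z, ∀ b ∈ Z, ∀ c ∈ Z, r a b → r b c → r a c) ∧
    ∀ a ∈ Z, ∀ b ∈ Z, ∀ c ∈ Z, ∀ d ∈ Z, r a b → r c d →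
      r (min a c) (min b d) ∧ r (max a c) (max b d) ∧ r (-a) (-b) ∧ r (SImp a c) (SImp b d)

/-! ### Auxiliary material -/

/-- Truncation map: collapse `[-m,m]` to `0`. -/
def tr (m : ℕ) (a : ℤ) : ℤ := if |a| ≤ (m : ℤ) then 0 else a

lemma eqm_iff_tr (m : ℕ) (a b : ℤ) : eqm m a b ↔ tr m a = tr m b := by
  unfold eqm tr
  rcases abs_cases a with ⟨h1, _⟩ | ⟨h1, _⟩ <;> rcases abs_cases b with ⟨h2, _⟩ | ⟨h2, _⟩ <;>
    split_ifs <;> omega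

lemma tr_mono (m : ℕ) : Monotone (tr m) := by
  intro a b hab
  unfold tr
  rcases abs_cases a with ⟨h1, _⟩ | ⟨h1, _⟩ <;> rcases abs_cases b with ⟨h2, _⟩ | ⟨h2, _⟩ <;>
    split_ifs <;> omega

lemma tr_neg (m : ℕ) (a : ℤ) : tr m (-a) = -tr m a := by
  unfold tr; rw [abs_neg]; split_ifs <;> simp

lemma tr_simp (m : ℕ) (a b : ℤ) : tr m (SImp a b) = SImp (tr m a) (tr m b) := by
  unfold SImp
  rcases le_or_gt a b with h | h
  · rw [if_pos h, if_pos (tr_mono m h), (tr_mono m).map_max, tr_neg]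
  · have h2 : tr m b ≤ tr m a := tr_mono m h.le
    rcases eq_or_lt_of_le h2 with he | hlt
    · have hab : |a| ≤ (m : ℤ) ∧ |b| ≤ (m : ℤ) := by
        unfold tr at he
        split_ifs at he <;>
          rcases abs_cases a with ⟨h1, _⟩ | ⟨h1, _⟩ <;>
            rcases abs_cases b with ⟨h2', _⟩ | ⟨h2', _⟩ <;> omega
      have ta : tr m a = 0 := if_pos hab.1
      have tb : tr m b = 0 := if_pos hab.2
      have ha' := abs_le.1 hab.1
      have hb' := abs_le.1 hab.2
      have hmin : |min (-a) b| ≤ (m : ℤ) := abs_le.2 ⟨by omega, by omega⟩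
      rw [if_neg (not_le.2 h), ta, tb, if_pos le_rfl]
      simp [tr, hmin]
    · rw [if_neg (not_le.2 h), if_neg (not_le.2 hlt), (tr_mono m).map_min, tr_neg]

section Zfacts

variable {n : ℕ} {Z : Set ℤ}

lemma mem_neg' (hZ : Z = Zeven n ∨ Z = Zodd n) {a : ℤ} (ha : a ∈ Z) : -a ∈ Z := by
  rcases hZ with rfl | rfl <;> simp only [Zeven, Zodd, Set.mem_setOf_eq] at ha ⊢ <;> omega

lemma mem_min' (hZ : Z = Zeven n ∨ Z = Zodd n) {a b : ℤ} (ha : a ∈ Z) (hb : b ∈ Z) : min a b ∈ Z := by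
  rcases hZ with rfl | rfl <;> simp only [Zeven, Zodd, Set.mem_setOf_eq] at ha hb ⊢ <;> omega

lemma mem_max' (hZ : Z = Zeven n ∨ Z = Zodd n) {a b : ℤ} (ha : a ∈ Z) (hb : b ∈ Z) : max a b ∈ Z := by
  rcases hZ with rfl | rfl <;> simp only [Zeven, Zodd, Set.mem_setOf_eq] at ha hb ⊢ <;> omega

lemma mem_abs' (hZ : Z = Zeven n ∨ Z = Zodd n) {a : ℤ} (ha : a ∈ Z) : |a| ∈ Z := by
  rcases abs_cases a with ⟨h1, _⟩ | ⟨h1, _⟩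
  · rwa [h1]
  · rw [h1]; exact mem_neg' hZ ha

lemma mem_simp' (hZ : Z = Zeven n ∨ Z = Zodd n) {a b : ℤ} (ha : a ∈ Z) (hb : b ∈ Z) : SImp a b ∈ Z := by
  unfold SImp
  split_ifs
  · exact mem_max' hZ (mem_neg' hZ ha) hb
  · exact mem_min' hZ (mem_neg' hZ ha) hb

lemma mem_bound' (hZ : Z = Zeven n ∨ Z = Zodd n) {a : ℤ} (ha : a ∈ Z) : |a| ≤ (n : ℤ) := by
  rcases hZ with rfl | rfl <;> simp only [Zeven, Zodd, Set.mem_setOf_eq] at ha <;>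
    rcases abs_cases a with ⟨h1, _⟩ | ⟨h1, _⟩ <;> omega

lemma mem_coe' (hZ : Z = Zeven n ∨ Z = Zodd n) {j : ℕ} (h1 : 1 ≤ j) (h2 : j ≤ n) : (j : ℤ) ∈ Z := by
  rcases hZ with rfl | rfl <;> simp only [Zeven, Zodd, Set.mem_setOf_eq] <;> omega

end Zfacts

/-- Collapse lemma: a nontrivial relation instance collapses `-M` with `M`. -/
lemma collapse {n : ℕ} {Z : Set ℤ} (hZ : Z = Zeven n ∨ Z = Zodd n) {r : ℤ → ℤ → Prop}
    (hc : Compatible Z r) {a b : ℤ} (ha : a ∈ Z) (hb : b ∈ Z) (hr : r a b) (hne : a ≠ b) :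
    r (-(max |a| |b|)) (max |a| |b|) := by
  obtain ⟨hrefl, hsymm, htrans, hop⟩ := hc
  have hna : -a ∈ Z := mem_neg' hZ ha
  have hnb : -b ∈ Z := mem_neg' hZ hb
  have h1 : r (-a) (-b) := (hop a ha b hb a ha b hb hr hr).2.2.1
  have h2 : r (max a (-a)) (max b (-b)) := (hop a ha b hb (-a) hna (-b) hnb hr h1).2.1
  have h3 : r |a| |b| := h2
  have haZ : |a| ∈ Z := mem_abs' hZ ha
  have hbZ : |b| ∈ Z := mem_abs' hZ hb
  rcases eq_or_ne |a| |b| with habs | habs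
  · -- then a = -b
    have hab : a = -b := by
      rcases abs_cases a with ⟨g1, _⟩ | ⟨g1, _⟩ <;> rcases abs_cases b with ⟨g2, _⟩ | ⟨g2, _⟩ <;>
        omega
    have hv : (a = -(max |a| |b|) ∧ b = max |a| |b|) ∨
        (a = max |a| |b| ∧ b = -(max |a| |b|)) := by
      rcases abs_cases a with ⟨g1, _⟩ | ⟨g1, _⟩ <;> rcases abs_cases b with ⟨g2, _⟩ | ⟨g2, _⟩ <;>
        omega
    rcases hv with ⟨e1, e2⟩ | ⟨e1, e2⟩
    · rw [← e2, ← hab]; exact hr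
    · rw [← e1]
      have h' : r b a := hsymm a ha b hb hr
      rwa [show b = -a by omega] at h'
  · -- |a| ≠ |b| : reduce to u < v with r u v
    have key : ∀ u v : ℤ, u ∈ Z → v ∈ Z → 0 ≤ u → u < v → r u v → r (-v) v := by
      intro u v hu hv hu0 huv hruv
      have hrvu : r v u := hsymm _ hu _ hv hruv
      have := (hop u hu v hv v hv u hu hruv hrvu).2.2.2
      have e1 : SImp u v = v := by
        unfold SImp; rw [if_pos huv.le]; exact max_eq_right (by omega)
      have e2 : SImp v u = -v := by
        unfold SImp; rw [if_neg (not_le.2 huv)]; exact min_eq_left (by omega)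
      rw [e1, e2] at this
      exact hsymm _ hv _ (mem_neg' hZ hv) this
    rcases lt_or_gt_of_ne habs with hlt | hlt
    · have hmax : max |a| |b| = |b| := max_eq_right hlt.le
      rw [hmax]
      exact key _ _ haZ hbZ (abs_nonneg a) hlt h3
    · have hmax : max |a| |b| = |a| := max_eq_left hlt.le
      rw [hmax]
      exact key _ _ hbZ haZ (abs_nonneg b) hlt (hsymm _ haZ _ hbZ h3)

theorem stmt4 (n : ℕ) (hn : 1 ≤ n) (Z : Set ℤ) (hZ : Z = Zeven n ∨ Z = Zodd n)
    (r : ℤ → ℤ → Prop) :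
    (Compatible Z r ↔ ∃ m : ℕ, m ≤ n ∧ ∀ a ∈ Z, ∀ b ∈ Z, (r a b ↔ eqm m a b)) ∧
    (∀ m m' : ℕ, m ≤ m' → ∀ a b : ℤ, eqm m a b → eqm m' a b) ∧
    (∀ a b : ℤ, eqm 0 a b ↔ a = b) ∧
    (∀ a ∈ Z, ∀ b ∈ Z, eqm n a b) := by
  refine ⟨⟨?_, ?_⟩, ?_, ?_, ?_⟩
  · -- Compatible → ∃ m
    intro hc
    obtain ⟨hrefl, hsymm, htrans, hop⟩ := hc
    set S : Set ℕ := {j : ℕ | 1 ≤ j ∧ j ≤ n ∧ r (-(j : ℤ)) (j : ℤ)} with hS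
    have hbdd : BddAbove S := ⟨n, fun j hj => hj.2.1⟩
    set m : ℕ := sSup S with hm
    have hmn : m ≤ n := by
      rcases Set.eq_empty_or_nonempty S with he | hne
      · rw [hm, he, csSup_empty]; exact Nat.zero_le n
      · exact ((Nat.sSup_mem hne hbdd).2.1)
    refine ⟨m, hmn, fun a ha b hb => ⟨fun hr => ?_, fun hr => ?_⟩⟩
    · -- r a b → eqm m a b
      rcases eq_or_ne a b with rfl | hne
      · exact Or.inl rfl
      · have hcol := collapse hZ ⟨hrefl, hsymm, htrans, hop⟩ ha hb hr hne
        set M : ℤ := max |a| |b| with hM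
        have hM1 : 1 ≤ M := by
          rcases abs_cases a with ⟨h1, _⟩ | ⟨h1, _⟩ <;>
            rcases abs_cases b with ⟨h2, _⟩ | ⟨h2, _⟩ <;> omega
        have hMn : M ≤ (n : ℤ) := max_le (mem_bound' hZ ha) (mem_bound' hZ hb)
        have hcast : ((M.toNat : ℤ)) = M := Int.toNat_of_nonneg (by omega)
        have hmem : M.toNat ∈ S := by
          refine ⟨by omega, by omega, ?_⟩
          rw [hcast]; exact hcol
        have hle : M.toNat ≤ m := le_csSup hbdd hmem
        right
        constructor <;> [skip; skip] <;>
          · have := le_max_left |a| |b|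
            have := le_max_right |a| |b|
            omega
    · -- eqm m a b → r a b
      rcases hr with rfl | ⟨ha', hb'⟩
      · exact hrefl a ha
      · rcases Nat.eq_zero_or_pos m with hm0 | hm1
        · rw [hm0] at ha' hb'
          have : a = b := by
            rcases abs_cases a with ⟨h1, _⟩ | ⟨h1, _⟩ <;>
              rcases abs_cases b with ⟨h2, _⟩ | ⟨h2, _⟩ <;> omega
          rw [this]; exact hrefl b hb
        · have hne : S.Nonempty := by
            by_contra hcon
            rw [Set.not_nonempty_iff_eq_empty] at hcon
            rw [hm, hcon, csSup_empty] at hm1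
            exact absurd hm1 (by simp)
          obtain ⟨_, hmn', hrm⟩ := Nat.sSup_mem hne hbdd
          have hmZ : ((m : ℤ)) ∈ Z := mem_coe' hZ hm1 hmn'
          have hnmZ : -((m : ℤ)) ∈ Z := mem_neg' hZ hmZ
          have step : ∀ c ∈ Z, |c| ≤ (m : ℤ) → r (-(m : ℤ)) c := by
            intro c hc hcm
            have := (hop _ hnmZ _ hmZ c hc c hc hrm (hrefl c hc)).1
            have h1 : min (-(m : ℤ)) c = -(m : ℤ) := min_eq_left (by
              rcases abs_cases c with ⟨g, _⟩ | ⟨g, _⟩ <;> omega)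
            have h2 : min ((m : ℤ)) c = c := min_eq_right (by
              rcases abs_cases c with ⟨g, _⟩ | ⟨g, _⟩ <;> omega)
            rwa [h1, h2] at this
          exact htrans _ ha _ hnmZ _ hb (hsymm _ hnmZ _ ha (step a ha ha')) (step b hb hb')
  · -- ∃ m → Compatible
    rintro ⟨m, hmn, hiff⟩
    have key : ∀ a ∈ Z, ∀ b ∈ Z, (r a b ↔ tr m a = tr m b) := by
      intro a ha b hb; rw [hiff a ha b hb, eqm_iff_tr]
    refine ⟨fun a ha => (key a ha a ha).2 rfl,
      fun a ha b hb h => (key b hb a ha).2 ((key a ha b hb).1 h).symm,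
      fun a ha b hb c hc h1 h2 =>
        (key a ha c hc).2 (((key a ha b hb).1 h1).trans ((key b hb c hc).1 h2)),
      fun a ha b hb c hc d hd h1 h2 => ?_⟩
    have e1 := (key a ha b hb).1 h1
    have e2 := (key c hc d hd).1 h2
    refine ⟨(key _ (mem_min' hZ ha hc) _ (mem_min' hZ hb hd)).2 ?_,
      (key _ (mem_max' hZ ha hc) _ (mem_max' hZ hb hd)).2 ?_,
      (key _ (mem_neg' hZ ha) _ (mem_neg' hZ hb)).2 ?_,
      (key _ (mem_simp' hZ ha hc) _ (mem_simp' hZ hb hd)).2 ?_⟩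
    · rw [(tr_mono m).map_min, (tr_mono m).map_min, e1, e2]
    · rw [(tr_mono m).map_max, (tr_mono m).map_max, e1, e2]
    · rw [tr_neg, tr_neg, e1]
    · rw [tr_simp, tr_simp, e1, e2]
  · -- monotonicity of eqm
    intro m m' hmm a b h
    rcases h with rfl | ⟨h1, h2⟩
    · exact Or.inl rfl
    · exact Or.inr ⟨h1.trans (by exact_mod_cast hmm), h2.trans (by exact_mod_cast hmm)⟩
  · -- eqm 0 is equality
    intro a b
    constructor
    · rintro (rfl | ⟨h1, h2⟩)
      · rfl
      · rcases abs_cases a with ⟨g1, _⟩ | ⟨g1, _⟩ <;>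
          rcases abs_cases b with ⟨g2, _⟩ | ⟨g2, _⟩ <;> omega
    · rintro rfl; exact Or.inl rfl
  · -- eqm n is total on Z
    intro a ha b hb
    exact Or.inr ⟨mem_bound' hZ ha, mem_bound' hZ hb⟩
end

section
/- Let 1 ≤ m ≤ n and let 0 < b₁ < b₂ < … < b_m ≤ n and 0 < c₁ < c₂ < … < c_m ≤ n be integers. (i) The sets A = {±b₁,…,±b_m} and B = {±c₁,…,±c_m} are subalgebras of Z_{2n}, and there is a bijective homomorphism e : A → B with e(b_i) = c_i for 1 ≤ i ≤ m. (ii) The sets A ∪ {0} and B ∪ {0} are subalgebras of Z_{2n+1}, and there is a bijective homomorphism e : A ∪ {0} → B ∪ {0} with e(b_i) = c_i for 1 ≤ i ≤ m and e(0) = 0. -/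
/-- The canonical order/negation preserving map sending `b i ↦ c i`, `-b i ↦ -c i`. -/
noncomputable def emap (m : ℕ) (b c : Fin m → ℤ) (x : ℤ) : ℤ :=
  if h : ∃ i, x = b i then c h.choose
  else if h : ∃ i, x = -b i then -c h.choose
  else 0

lemma subalg_of_symm (Z S : Set ℤ) (hne : S.Nonempty) (hsub : S ⊆ Z)
    (hsymm : ∀ x ∈ S, -x ∈ S) : Subalg Z S := by
  refine ⟨hne, hsub, fun a ha b hb => ?_⟩
  have hmin : ∀ x ∈ S, ∀ y ∈ S, min x y ∈ S := by
    intro x hx y hy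
    rcases le_total x y with h | h
    · rw [min_eq_left h]; exact hx
    · rw [min_eq_right h]; exact hy
  have hmax : ∀ x ∈ S, ∀ y ∈ S, max x y ∈ S := by
    intro x hx y hy
    rcases le_total x y with h | h
    · rw [max_eq_right h]; exact hy
    · rw [max_eq_left h]; exact hx
  refine ⟨hmin a ha b hb, hmax a ha b hb, hsymm a ha, ?_⟩
  unfold SImp
  split
  · exact hmax _ (hsymm a ha) _ hb
  · exact hmin _ (hsymm a ha) _ hb

lemma shom_aux (S T : Set ℤ) (e : ℤ → ℤ)
    (hmt : Set.MapsTo e S T)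
    (hsymm : ∀ x ∈ S, -x ∈ S)
    (hneg : ∀ x ∈ S, e (-x) = -e x)
    (hkey : ∀ x ∈ S, ∀ y ∈ S, (x ≤ y ↔ e x ≤ e y)) :
    SHom S T e := by
  have hmin : ∀ x ∈ S, ∀ y ∈ S, e (min x y) = min (e x) (e y) := by
    intro x hx y hy
    rcases le_total x y with h | h
    · rw [min_eq_left h, min_eq_left ((hkey x hx y hy).mp h)]
    · rw [min_eq_right h, min_eq_right ((hkey y hy x hx).mp h)]
  have hmax : ∀ x ∈ S, ∀ y ∈ S, e (max x y) = max (e x) (e y) := by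
    intro x hx y hy
    rcases le_total x y with h | h
    · rw [max_eq_right h, max_eq_right ((hkey x hx y hy).mp h)]
    · rw [max_eq_left h, max_eq_left ((hkey y hy x hx).mp h)]
  refine ⟨hmt, fun a ha b hb => ⟨hmin a ha b hb, hmax a ha b hb, hneg a ha, ?_⟩⟩
  unfold SImp
  by_cases h : a ≤ b
  · rw [if_pos h, if_pos ((hkey a ha b hb).mp h), hmax _ (hsymm a ha) _ hb, hneg a ha]
  · rw [if_neg h, if_neg (fun hh => h ((hkey a ha b hb).mpr hh)),
      hmin _ (hsymm a ha) _ hb, hneg a ha]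

theorem stmt5 (m n : ℕ) (hm : 1 ≤ m) (hmn : m ≤ n) (b c : Fin m → ℤ)
    (hbmono : StrictMono b) (hcmono : StrictMono c)
    (hb0 : ∀ i, 0 < b i) (hbn : ∀ i, b i ≤ (n : ℤ))
    (hc0 : ∀ i, 0 < c i) (hcn : ∀ i, c i ≤ (n : ℤ))
    (A B : Set ℤ)
    (hA : A = {x : ℤ | ∃ i, x = b i ∨ x = -b i})
    (hB : B = {x : ℤ | ∃ i, x = c i ∨ x = -c i}) :
    (Subalg (Zeven n) A ∧ Subalg (Zeven n) B ∧
      ∃ e : ℤ → ℤ, SHom A B e ∧ Set.BijOn e A B ∧ ∀ i, e (b i) = c i) ∧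
    (Subalg (Zodd n) (A ∪ {0}) ∧ Subalg (Zodd n) (B ∪ {0}) ∧
      ∃ e : ℤ → ℤ, SHom (A ∪ {0}) (B ∪ {0}) e ∧ Set.BijOn e (A ∪ {0}) (B ∪ {0}) ∧
        (∀ i, e (b i) = c i) ∧ e 0 = 0) := by
  have hn0 : (0 : ℤ) ≤ (n : ℤ) := Int.natCast_nonneg n
  set e := emap m b c with he_def
  -- values of e
  have he_pos : ∀ i, e (b i) = c i := by
    intro i
    have h : ∃ j, b i = b j := ⟨i, rfl⟩
    rw [he_def, emap, dif_pos h]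
    rw [hbmono.injective h.choose_spec.symm]
  have he_neg : ∀ i, e (-b i) = -c i := by
    intro i
    have h1 : ¬ ∃ j, -b i = b j := by
      rintro ⟨j, hj⟩; have := hb0 i; have := hb0 j; omega
    have h2 : ∃ j, -b i = -b j := ⟨i, rfl⟩
    rw [he_def, emap, dif_neg h1, dif_pos h2]
    have : b h2.choose = b i := by have := h2.choose_spec; omega
    rw [hbmono.injective this]
  have he0 : e 0 = 0 := by
    have h1 : ¬ ∃ j, (0:ℤ) = b j := by rintro ⟨j, hj⟩; have := hb0 j; omega
    have h2 : ¬ ∃ j, (0:ℤ) = -b j := by rintro ⟨j, hj⟩; have := hb0 j; omega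
    rw [he_def, emap, dif_neg h1, dif_neg h2]
  -- membership descriptions
  have hAmem : ∀ x ∈ A ∪ ({0} : Set ℤ), (∃ i, x = b i) ∨ (∃ i, x = -b i) ∨ x = 0 := by
    intro x hx
    rcases hx with hx | hx
    · rw [hA] at hx
      obtain ⟨i, hi | hi⟩ := hx
      · exact Or.inl ⟨i, hi⟩
      · exact Or.inr (Or.inl ⟨i, hi⟩)
    · exact Or.inr (Or.inr hx)
  have hBmem : ∀ x ∈ B ∪ ({0} : Set ℤ), (∃ i, x = c i) ∨ (∃ i, x = -c i) ∨ x = 0 := by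
    intro x hx
    rcases hx with hx | hx
    · rw [hB] at hx
      obtain ⟨i, hi | hi⟩ := hx
      · exact Or.inl ⟨i, hi⟩
      · exact Or.inr (Or.inl ⟨i, hi⟩)
    · exact Or.inr (Or.inr hx)
  have hbiA : ∀ i, b i ∈ A := by intro i; rw [hA]; exact ⟨i, Or.inl rfl⟩
  have hnbiA : ∀ i, -b i ∈ A := by intro i; rw [hA]; exact ⟨i, Or.inr rfl⟩
  have hciB : ∀ i, c i ∈ B := by intro i; rw [hB]; exact ⟨i, Or.inl rfl⟩
  have hnciB : ∀ i, -c i ∈ B := by intro i; rw [hB]; exact ⟨i, Or.inr rfl⟩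
  -- key order lemma
  have key : ∀ x ∈ A ∪ ({0} : Set ℤ), ∀ y ∈ A ∪ ({0} : Set ℤ), (x ≤ y ↔ e x ≤ e y) := by
    intro x hx y hy
    rcases hAmem x hx with ⟨i, rfl⟩ | ⟨i, rfl⟩ | rfl <;>
      rcases hAmem y hy with ⟨j, rfl⟩ | ⟨j, rfl⟩ | rfl <;>
      simp only [he_pos, he_neg, he0]
    · exact hbmono.le_iff_le.trans hcmono.le_iff_le.symm
    · have := hb0 i; have := hb0 j; have := hc0 i; have := hc0 j; omega
    · have := hb0 i; have := hc0 i; omega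
    · have := hb0 i; have := hb0 j; have := hc0 i; have := hc0 j; omega
    · rw [neg_le_neg_iff, neg_le_neg_iff]
      exact hbmono.le_iff_le.trans hcmono.le_iff_le.symm
    · have := hb0 i; have := hc0 i; omega
    · have := hb0 j; have := hc0 j; omega
    · have := hb0 j; have := hc0 j; omega
  have keyA : ∀ x ∈ A, ∀ y ∈ A, (x ≤ y ↔ e x ≤ e y) := fun x hx y hy =>
    key x (Or.inl hx) y (Or.inl hy)
  -- negation preservation
  have hsymmA : ∀ x ∈ A, -x ∈ A := by
    intro x hx
    rw [hA] at hx ⊢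
    obtain ⟨i, hi | hi⟩ := hx
    · exact ⟨i, Or.inr (by omega)⟩
    · exact ⟨i, Or.inl (by omega)⟩
  have hsymmA0 : ∀ x ∈ A ∪ ({0} : Set ℤ), -x ∈ A ∪ ({0} : Set ℤ) := by
    intro x hx
    rcases hx with hx | hx
    · exact Or.inl (hsymmA x hx)
    · simp only [Set.mem_singleton_iff] at hx; right; simp [hx]
  have hneg : ∀ x ∈ A ∪ ({0} : Set ℤ), e (-x) = -e x := by
    intro x hx
    rcases hAmem x hx with ⟨i, rfl⟩ | ⟨i, rfl⟩ | rfl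
    · rw [he_pos, he_neg]
    · rw [neg_neg, he_pos, he_neg, neg_neg]
    · rw [neg_zero, he0, neg_zero]
  have hnegA : ∀ x ∈ A, e (-x) = -e x := fun x hx => hneg x (Or.inl hx)
  -- maps-to
  have hmtA : Set.MapsTo e A B := by
    intro x hx
    rw [hA] at hx
    obtain ⟨i, hi | hi⟩ := hx <;> subst hi
    · rw [he_pos]; exact hciB i
    · rw [he_neg]; exact hnciB i
  have hmtA0 : Set.MapsTo e (A ∪ {0}) (B ∪ {0}) := by
    intro x hx
    rcases hx with hx | hx
    · exact Or.inl (hmtA hx)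
    · simp only [Set.mem_singleton_iff] at hx; subst hx
      right; simp [he0]
  -- injectivity
  have hinj : Set.InjOn e (A ∪ {0}) := by
    intro x hx y hy h
    exact le_antisymm ((key x hx y hy).mpr h.le) ((key y hy x hx).mpr h.ge)
  -- subalgebra facts
  have hsubA : A ⊆ Zeven n := by
    intro x hx
    rw [hA] at hx
    obtain ⟨i, hi | hi⟩ := hx <;> subst hi <;>
      exact ⟨⟨by have := hb0 i; have := hbn i; omega, by have := hb0 i; have := hbn i; omega⟩,
        by have := hb0 i; omega⟩
  have hsubB : B ⊆ Zeven n := by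
    intro x hx
    rw [hB] at hx
    obtain ⟨i, hi | hi⟩ := hx <;> subst hi <;>
      exact ⟨⟨by have := hc0 i; have := hcn i; omega, by have := hc0 i; have := hcn i; omega⟩,
        by have := hc0 i; omega⟩
  have hsymmB : ∀ x ∈ B, -x ∈ B := by
    intro x hx
    rw [hB] at hx ⊢
    obtain ⟨i, hi | hi⟩ := hx
    · exact ⟨i, Or.inr (by omega)⟩
    · exact ⟨i, Or.inl (by omega)⟩
  have hsymmB0 : ∀ x ∈ B ∪ ({0} : Set ℤ), -x ∈ B ∪ ({0} : Set ℤ) := by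
    intro x hx
    rcases hx with hx | hx
    · exact Or.inl (hsymmB x hx)
    · simp only [Set.mem_singleton_iff] at hx; right; simp [hx]
  have i0 : Fin m := ⟨0, hm⟩
  constructor
  · refine ⟨subalg_of_symm _ _ ⟨b i0, hbiA i0⟩ hsubA hsymmA,
      subalg_of_symm _ _ ⟨c i0, hciB i0⟩ hsubB hsymmB, e, ?_, ⟨hmtA, ?_, ?_⟩, he_pos⟩
    · exact shom_aux A B e hmtA hsymmA hnegA keyA
    · exact fun x hx y hy h => hinj (Or.inl hx) (Or.inl hy) h
    · intro y hy
      rw [hB] at hy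
      obtain ⟨i, hi | hi⟩ := hy <;> subst hi
      · exact ⟨b i, hbiA i, he_pos i⟩
      · exact ⟨-b i, hnbiA i, he_neg i⟩
  · have hsubA0 : A ∪ {0} ⊆ Zodd n := by
      intro x hx
      rcases hx with hx | hx
      · exact ⟨(hsubA hx).1.1, (hsubA hx).1.2⟩
      · simp only [Set.mem_singleton_iff] at hx; subst hx
        exact ⟨by omega, by omega⟩
    have hsubB0 : B ∪ {0} ⊆ Zodd n := by
      intro x hx
      rcases hx with hx | hx
      · exact ⟨(hsubB hx).1.1, (hsubB hx).1.2⟩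
      · simp only [Set.mem_singleton_iff] at hx; subst hx
        exact ⟨by omega, by omega⟩
    refine ⟨subalg_of_symm _ _ ⟨b i0, Or.inl (hbiA i0)⟩ hsubA0 hsymmA0,
      subalg_of_symm _ _ ⟨c i0, Or.inl (hciB i0)⟩ hsubB0 hsymmB0, e, ?_, ⟨hmtA0, hinj, ?_⟩,
      he_pos, he0⟩
    · exact shom_aux _ _ e hmtA0 hsymmA0 hneg key
    · intro y hy
      rcases hBmem y hy with ⟨i, rfl⟩ | ⟨i, rfl⟩ | rfl
      · exact ⟨b i, Or.inl (hbiA i), he_pos i⟩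
      · exact ⟨-b i, Or.inl (hnbiA i), he_neg i⟩
      · exact ⟨0, Or.inr rfl, he0⟩
end

section
/- Let n ≥ 1 and let F_n be the set of partial functions on Z_{2n} consisting of the identity map of Z_{2n} together with all finite compositions of the maps f_2, …, f_n, g. Then for every m with 1 ≤ m ≤ n and every subalgebra A of Z_{2n} with |A| = 2m, there exists φ ∈ F_n such that A ⊆ dom φ, the restriction of φ to A is a bijection from A onto Z_{2m} preserving ∧, ∨, ¬ and →, and the inverse of this bijection is the restriction to Z_{2m} of some member of F_n. -/
/-- The partial endomorphism `f_i` of `Z_{2n}` (for `2 ≤ i ≤ n`), as a partial function. -/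
def fE (n i : ℕ) : ℤ →. ℤ :=
  PFun.res
    (fun a => if a = (i : ℤ) - 1 then (i : ℤ) else if a = -((i : ℤ) - 1) then -(i : ℤ) else a)
    (Zeven n \ {(i : ℤ), -(i : ℤ)})

/-- The partial endomorphism `g` of `Z_{2n}`, as a partial function. -/
def gE (n : ℕ) : ℤ →. ℤ :=
  PFun.res (fun a => if 0 < a then a - 1 else a + 1) (Zeven n \ {1, -1})

/-- The generating set `{f_2, …, f_n, g}`. -/
def GenEven (n : ℕ) : Set (ℤ →. ℤ) :=
  {p | (∃ i : ℕ, 2 ≤ i ∧ i ≤ n ∧ p = fE n i) ∨ p = gE n}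

/-- Finite compositions of members of `G`. -/
inductive FinComp (G : Set (ℤ →. ℤ)) : (ℤ →. ℤ) → Prop
  | base {f : ℤ →. ℤ} : f ∈ G → FinComp G f
  | comp {f g : ℤ →. ℤ} : FinComp G f → FinComp G g → FinComp G (f.comp g)

def Pn (n : ℕ) (φ : ℤ →. ℤ) : Prop := φ = PFun.res id (Zeven n) ∨ FinComp (GenEven n) φ

lemma memComp {f g : ℤ →. ℤ} {x y : ℤ} : y ∈ (f.comp g) x ↔ ∃ z, z ∈ g x ∧ y ∈ f z := by
  simp [PFun.comp_apply, Part.mem_bind_iff]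
  exact Part.mem_bind_iff

lemma fE_ran {n i : ℕ} (hi : 2 ≤ i) (hin : i ≤ n) {x y : ℤ} (h : y ∈ fE n i x) :
    y ∈ Zeven n := by
  rw [fE, PFun.mem_res] at h
  obtain ⟨⟨hx, -⟩, hfx⟩ := h
  simp only [Zeven, Set.mem_setOf_eq] at hx ⊢
  split_ifs at hfx <;> omega

lemma gE_dom {n : ℕ} {x y : ℤ} (h : y ∈ gE n x) : x ∈ Zeven n := by
  rw [gE, PFun.mem_res] at h
  exact h.1.1

lemma Pn_comp_gE {n : ℕ} {φ : ℤ →. ℤ} (h : Pn n φ) : Pn n ((gE n).comp φ) := by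
  rcases h with h | h
  · right
    have : (gE n).comp φ = gE n := by
      subst h
      apply PFun.ext
      intro x y
      rw [memComp]
      constructor
      · rintro ⟨z, hz, hy⟩
        rw [PFun.mem_res] at hz
        rcases hz with ⟨-, rfl⟩
        exact hy
      · intro hy
        exact ⟨x, by rw [PFun.mem_res]; exact ⟨gE_dom hy, rfl⟩, hy⟩
    rw [this]
    exact FinComp.base (Or.inr rfl)
  · exact Or.inr (FinComp.comp (FinComp.base (Or.inr rfl)) h)

lemma Pn_comp_fE {n i : ℕ} (hi : 2 ≤ i) (hin : i ≤ n) {χ : ℤ →. ℤ} (h : Pn n χ) :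
    Pn n (χ.comp (fE n i)) := by
  rcases h with h | h
  · right
    have : χ.comp (fE n i) = fE n i := by
      subst h
      apply PFun.ext
      intro x y
      rw [memComp]
      constructor
      · rintro ⟨z, hz, hy⟩
        rw [PFun.mem_res] at hy
        rcases hy with ⟨-, rfl⟩
        exact hz
      · intro hy
        exact ⟨y, hy, by rw [PFun.mem_res]; exact ⟨fE_ran hi hin hy, rfl⟩⟩
    rw [this]
    exact FinComp.base (Or.inl ⟨i, hi, hin, rfl⟩)
  · exact Or.inr (FinComp.comp h (FinComp.base (Or.inl ⟨i, hi, hin, rfl⟩)))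

lemma chainU_aux (n : ℕ) (N : ℕ) : ∀ (m : ℕ) (a b : Fin m → ℤ), StrictMono a → StrictMono b →
    (∀ j, 0 < a j) → (∀ j, a j ≤ b j) → (∀ j, b j ≤ (n : ℤ)) →
    (∑ j, (b j - a j).toNat) ≤ N →
    ∃ χ : ℤ →. ℤ, Pn n χ ∧ ∀ j, b j ∈ χ (a j) ∧ -(b j) ∈ χ (-(a j)) := by
  induction N with
  | zero =>
    intro m a b ha hb hpos hab hbn hsum
    have heq : ∀ j, a j = b j := by
      intro j
      have h1 : (b j - a j).toNat = 0 := by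
        have := Finset.sum_eq_zero_iff.mp (Nat.le_zero.mp hsum) j (Finset.mem_univ j)
        exact this
      have := hab j
      omega
    refine ⟨PFun.res id (Zeven n), Or.inl rfl, fun j => ?_⟩
    have hz : a j ∈ Zeven n := by
      simp only [Zeven, Set.mem_setOf_eq]
      have h1 := hpos j; have h2 := hab j; have h3 := hbn j
      omega
    have hz' : -(a j) ∈ Zeven n := by
      simp only [Zeven, Set.mem_setOf_eq] at hz ⊢
      omega
    constructor
    · rw [PFun.mem_res]; exact ⟨hz, heq j⟩
    · rw [PFun.mem_res]; exact ⟨hz', by rw [heq j]; rfl⟩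
  | succ N ih =>
    intro m a b ha hb hpos hab hbn hsum
    by_cases hall : ∀ j, a j = b j
    · -- same as base case
      refine ⟨PFun.res id (Zeven n), Or.inl rfl, fun j => ?_⟩
      have hz : a j ∈ Zeven n := by
        simp only [Zeven, Set.mem_setOf_eq]
        have h1 := hpos j; have h2 := hab j; have h3 := hbn j
        omega
      have hz' : -(a j) ∈ Zeven n := by
        simp only [Zeven, Set.mem_setOf_eq] at hz ⊢; omega
      constructor
      · rw [PFun.mem_res]; exact ⟨hz, hall j⟩
      · rw [PFun.mem_res]; exact ⟨hz', by rw [hall j]; rfl⟩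
    · push_neg at hall
      -- pick maximal j with a j < b j
      set s : Finset (Fin m) := Finset.univ.filter (fun j => a j < b j) with hs_def
      have hs : s.Nonempty := by
        obtain ⟨j, hj⟩ := hall
        exact ⟨j, by simp [hs_def]; exact lt_of_le_of_ne (hab j) hj⟩
      set j := s.max' hs with hj_def
      have hjlt : a j < b j := by
        have := s.max'_mem hs
        simpa [hs_def] using this
      have habove : ∀ k, j < k → a k = b k := by
        intro k hk
        by_contra hne
        have hk_mem : k ∈ s := by
          simp [hs_def]; exact lt_of_le_of_ne (hab k) hne
        exact absurd (s.le_max' k hk_mem) (not_le.mpr hk)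
      -- the moving index: new value a j + 1
      have hkey : ∀ k, j < k → a j + 2 ≤ a k := by
        intro k hk
        have h1 : b j < b k := hb hk
        have h2 := habove k hk
        omega
      set a' : Fin m → ℤ := Function.update a j (a j + 1) with ha'_def
      have ha'j : a' j = a j + 1 := by simp [ha'_def]
      have ha'k : ∀ k, k ≠ j → a' k = a k := by
        intro k hk; simp [ha'_def, Function.update_of_ne hk]
      have ha' : StrictMono a' := by
        intro p q hpq
        rcases eq_or_ne p j with rfl | hp <;> rcases eq_or_ne q j with rfl | hq
        · exact absurd hpq (lt_irrefl _)
        · rw [ha'j, ha'k q hq]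
          have := hkey q hpq; omega
        · rw [ha'k p hp, ha'j]
          have := ha hpq; omega
        · rw [ha'k p hp, ha'k q hq]; exact ha hpq
      have hpos' : ∀ k, 0 < a' k := by
        intro k
        rcases eq_or_ne k j with rfl | hk
        · rw [ha'j]; have := hpos j; omega
        · rw [ha'k k hk]; exact hpos k
      have hab' : ∀ k, a' k ≤ b k := by
        intro k
        rcases eq_or_ne k j with rfl | hk
        · rw [ha'j]; omega
        · rw [ha'k k hk]; exact hab k
      have hsum' : (∑ k, (b k - a' k).toNat) ≤ N := by
        have hlt : (∑ k, (b k - a' k).toNat) < ∑ k, (b k - a k).toNat := by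
          apply Finset.sum_lt_sum
          · intro k _
            rcases eq_or_ne k j with rfl | hk
            · rw [ha'j]; omega
            · rw [ha'k k hk]
          · exact ⟨j, Finset.mem_univ j, by rw [ha'j]; omega⟩
        omega
      obtain ⟨χ', hχ'P, hχ'mem⟩ := ih m a' b ha' hb hpos' hab' hbn hsum'
      set i : ℕ := (a j + 1).toNat with hi_def
      have hi_coe : (i : ℤ) = a j + 1 := by
        have := hpos j; omega
      have hi2 : 2 ≤ i := by have := hpos j; omega
      have hin : i ≤ n := by
        have h1 := hbn j; omega
      refine ⟨χ'.comp (fE n i), Pn_comp_fE hi2 hin hχ'P, fun k => ?_⟩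
      have hzk : a k ∈ Zeven n := by
        simp only [Zeven, Set.mem_setOf_eq]
        have h1 := hpos k; have h2 := hab k; have h3 := hbn k; omega
      have hne_i : a k ≠ (i : ℤ) ∧ a k ≠ -(i : ℤ) := by
        rw [hi_coe]
        rcases lt_trichotomy k j with hk | rfl | hk
        · have := ha hk; have := hpos k; omega
        · have := hpos j; omega
        · have := hkey k hk; have := hpos k; omega
      have hformula : (if a k = (i : ℤ) - 1 then (i : ℤ) else if a k = -((i : ℤ) - 1) then -(i : ℤ) else a k) = a' k := by
        rw [hi_coe]
        rcases eq_or_ne k j with rfl | hk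
        · simp [ha'j]
        · have h1 : a k ≠ a j := fun h => hk (ha.injective h)
          have h2 : a k ≠ -(a j) := by have := hpos k; have := hpos j; omega
          rw [ha'k k hk]
          simp only [add_sub_cancel_right]
          rw [if_neg h1, if_neg h2]
      have hformula' : (if -(a k) = (i : ℤ) - 1 then (i : ℤ) else if -(a k) = -((i : ℤ) - 1) then -(i : ℤ) else -(a k)) = -(a' k) := by
        rw [hi_coe]
        have h0 : -(a k) ≠ a j := by have := hpos k; have := hpos j; omega
        simp only [add_sub_cancel_right]
        rw [if_neg h0]
        rcases eq_or_ne k j with rfl | hk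
        · simp [ha'j]
        · have h1 : -(a k) ≠ -(a j) := by
            intro h; exact hk (ha.injective (neg_injective h))
          rw [if_neg h1, ha'k k hk]
      constructor
      · rw [memComp]
        refine ⟨a' k, ?_, (hχ'mem k).1⟩
        rw [fE, PFun.mem_res]
        refine ⟨⟨hzk, ?_⟩, hformula⟩
        simp only [Set.mem_insert_iff, Set.mem_singleton_iff]
        push_neg
        exact hne_i
      · rw [memComp]
        refine ⟨-(a' k), ?_, (hχ'mem k).2⟩
        rw [fE, PFun.mem_res]
        refine ⟨⟨by simp only [Zeven, Set.mem_setOf_eq] at hzk ⊢; omega, ?_⟩, hformula'⟩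
        simp only [Set.mem_insert_iff, Set.mem_singleton_iff]
        push_neg
        constructor
        · intro h; exact hne_i.2 (by omega)
        · intro h; exact hne_i.1 (by omega)

lemma gsteps (n : ℕ) {m : ℕ} (a : Fin m → ℤ) (k : ℕ) :
    ∀ (v : Fin m → ℤ) (χ : ℤ →. ℤ), Pn n χ →
    (∀ j, (k : ℤ) + 1 ≤ v j) → (∀ j, v j ≤ (n : ℤ)) →
    (∀ j, v j ∈ χ (a j) ∧ -(v j) ∈ χ (-(a j))) →
    ∃ φ : ℤ →. ℤ, Pn n φ ∧ ∀ j, (v j - k) ∈ φ (a j) ∧ -(v j - k) ∈ φ (-(a j)) := by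
  induction k with
  | zero =>
    intro v χ hχ _ _ hmem
    exact ⟨χ, hχ, fun j => by simpa using hmem j⟩
  | succ k ih =>
    intro v χ hχ hv1 hvn hmem
    obtain ⟨φ', hφ'P, hφ'mem⟩ := ih v χ hχ (fun j => by have := hv1 j; push_cast at this ⊢; omega) hvn hmem
    refine ⟨(gE n).comp φ', Pn_comp_gE hφ'P, fun j => ?_⟩
    have h1 : (k : ℤ) + 2 ≤ v j := by have := hv1 j; push_cast at this; omega
    have hz : v j - k ∈ Zeven n \ {1, -1} := by
      simp only [Zeven, Set.mem_diff, Set.mem_setOf_eq, Set.mem_insert_iff,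
        Set.mem_singleton_iff]
      have := hvn j
      push_neg
      omega
    have hz' : -(v j - k) ∈ Zeven n \ {1, -1} := by
      simp only [Zeven, Set.mem_diff, Set.mem_setOf_eq, Set.mem_insert_iff,
        Set.mem_singleton_iff] at hz ⊢
      push_neg at hz ⊢
      omega
    constructor
    · rw [memComp]
      refine ⟨v j - k, (hφ'mem j).1, ?_⟩
      rw [gE, PFun.mem_res]
      refine ⟨hz, ?_⟩
      rw [if_pos (by omega : (0:ℤ) < v j - k)]
      push_cast
      ring
    · rw [memComp]
      refine ⟨-(v j - k), (hφ'mem j).2, ?_⟩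
      rw [gE, PFun.mem_res]
      refine ⟨hz', ?_⟩
      rw [if_neg (by omega : ¬ (0:ℤ) < -(v j - k))]
      push_cast
      ring

open Classical in
noncomputable def mkE (m : ℕ) (a : Fin m → ℤ) : ℤ → ℤ := fun x =>
  if hx : ∃ j, a j = x then ((hx.choose : ℕ) : ℤ) + 1
  else if hx' : ∃ j, a j = -x then -(((hx'.choose : ℕ) : ℤ) + 1) else 0

lemma mkE_pos {m : ℕ} {a : Fin m → ℤ} (hinj : Function.Injective a) (j : Fin m) :
    mkE m a (a j) = ((j : ℕ) : ℤ) + 1 := by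
  unfold mkE
  have hx : ∃ i, a i = a j := ⟨j, rfl⟩
  rw [dif_pos hx]
  have h : hx.choose = j := hinj hx.choose_spec
  rw [h]

lemma mkE_neg {m : ℕ} {a : Fin m → ℤ} (hinj : Function.Injective a)
    (hpos : ∀ j, 0 < a j) (j : Fin m) :
    mkE m a (-(a j)) = -(((j : ℕ) : ℤ) + 1) := by
  unfold mkE
  have hx : ¬ ∃ i, a i = -(a j) := by
    rintro ⟨i, hi⟩
    have := hpos i; have := hpos j; omega
  rw [dif_neg hx]
  have hx' : ∃ i, a i = -(-(a j)) := ⟨j, by ring⟩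
  rw [dif_pos hx']
  have h : hx'.choose = j := hinj (by rw [hx'.choose_spec]; ring)
  rw [h]

noncomputable def mkE' (m : ℕ) (a : Fin m → ℤ) : ℤ → ℤ := fun y =>
  if hy : 1 ≤ y ∧ y ≤ (m : ℤ) then a ⟨(y - 1).toNat, by omega⟩
  else if hy' : 1 ≤ -y ∧ -y ≤ (m : ℤ) then -(a ⟨(-y - 1).toNat, by omega⟩) else 0

lemma mkE'_pos {m : ℕ} {a : Fin m → ℤ} {y : ℤ} (h1 : 1 ≤ y) (h2 : y ≤ (m : ℤ))
    (h : (y - 1).toNat < m) : mkE' m a y = a ⟨(y - 1).toNat, h⟩ := by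
  unfold mkE'
  rw [dif_pos ⟨h1, h2⟩]

lemma mkE'_neg {m : ℕ} {a : Fin m → ℤ} {y : ℤ} (h1 : y ≤ -1) (h2 : -(m : ℤ) ≤ y)
    (h : (-y - 1).toNat < m) : mkE' m a y = -(a ⟨(-y - 1).toNat, h⟩) := by
  unfold mkE'
  rw [dif_neg (by omega), dif_pos ⟨by omega, by omega⟩]

theorem stmt6 (n : ℕ) (hn : 1 ≤ n) (m : ℕ) (hm : 1 ≤ m) (hmn : m ≤ n)
    (A : Set ℤ) (hA : Subalg (Zeven n) A) (hcard : A.ncard = 2 * m) :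
    ∃ φ : ℤ →. ℤ, (φ = PFun.res id (Zeven n) ∨ FinComp (GenEven n) φ) ∧
      A ⊆ φ.Dom ∧
      ∃ e : ℤ → ℤ, (∀ a ∈ A, e a ∈ φ a) ∧ SHom A (Zeven m) e ∧ Set.BijOn e A (Zeven m) ∧
        ∃ ψ : ℤ →. ℤ, (ψ = PFun.res id (Zeven n) ∨ FinComp (GenEven n) ψ) ∧
          Zeven m ⊆ ψ.Dom ∧
          ∃ e' : ℤ → ℤ, (∀ b ∈ Zeven m, e' b ∈ ψ b) ∧
            (∀ a ∈ A, e' (e a) = a) ∧ ∀ b ∈ Zeven m, e (e' b) = b := by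
  classical
  obtain ⟨hAne, hAsub, hAcl⟩ := hA
  have hneg : ∀ x ∈ A, -x ∈ A := fun x hx => (hAcl x hx x hx).2.2.1
  have hAZ : ∀ x ∈ A, (-(n : ℤ) ≤ x ∧ x ≤ (n : ℤ)) ∧ x ≠ 0 := fun x hx => hAsub hx
  have hfin : A.Finite := Set.Finite.subset (Set.finite_Icc (-(n : ℤ)) n)
    (fun x hx => Set.mem_Icc.mpr ⟨(hAZ x hx).1.1, (hAZ x hx).1.2⟩)
  set s : Finset ℤ := hfin.toFinset with hs_def
  have hmem_s : ∀ x, x ∈ s ↔ x ∈ A := fun x => hfin.mem_toFinset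
  have hscard : s.card = 2 * m := by
    rw [Set.ncard_eq_toFinset_card _ hfin] at hcard
    exact hcard
  set sp : Finset ℤ := s.filter (fun x => 0 < x) with hsp_def
  set sn : Finset ℤ := s.filter (fun x => x < 0) with hsn_def
  have hsn_img : sn = sp.image (fun x => -x) := by
    ext y
    simp only [hsn_def, hsp_def, Finset.mem_filter, Finset.mem_image, hmem_s]
    constructor
    · rintro ⟨hy, hy0⟩
      exact ⟨-y, ⟨hneg y hy, by omega⟩, by ring⟩
    · rintro ⟨x, ⟨hx, hx0⟩, rfl⟩
      exact ⟨hneg x hx, by omega⟩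
  have hspcard : sp.card = m := by
    have h1 : sn.card = sp.card := by
      rw [hsn_img]; exact Finset.card_image_of_injective _ neg_injective
    have hdisj : Disjoint sp sn := by
      rw [Finset.disjoint_left]
      intro x hx hx'
      simp only [hsp_def, hsn_def, Finset.mem_filter] at hx hx'
      omega
    have h2 : sp ∪ sn = s := by
      rw [hsp_def, hsn_def, ← Finset.filter_or]
      apply Finset.filter_true_of_mem
      intro x hx
      have := (hAZ x ((hmem_s x).1 hx)).2
      omega
    have h3 := Finset.card_union_of_disjoint hdisj
    rw [h2, hscard] at h3
    omega
  set o := sp.orderIsoOfFin hspcard with ho_def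
  set a : Fin m → ℤ := fun j => (o j : ℤ) with ha_def
  have haS : StrictMono a := by
    intro p q h
    have h2 : o p < o q := o.strictMono h
    exact_mod_cast h2
  have hasp : ∀ j, a j ∈ sp := fun j => (o j).2
  have haA : ∀ j, a j ∈ A := fun j => (hmem_s _).1 (Finset.mem_filter.mp (hasp j)).1
  have hapos : ∀ j, 0 < a j := fun j => (Finset.mem_filter.mp (hasp j)).2
  have han : ∀ j, a j ≤ (n : ℤ) := fun j => (hAZ _ (haA j)).1.2
  have hsurj : ∀ x ∈ sp, ∃ j, a j = x := by
    intro x hx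
    refine ⟨o.symm ⟨x, hx⟩, ?_⟩
    rw [ha_def]
    simp
  have hainj : Function.Injective a := haS.injective
  have hcases : ∀ x ∈ A, (∃ j, a j = x) ∨ (∃ j, a j = -x) := by
    intro x hx
    rcases lt_trichotomy 0 x with h | h | h
    · exact Or.inl (hsurj x (Finset.mem_filter.mpr ⟨(hmem_s x).2 hx, h⟩))
    · exact absurd h.symm (hAZ x hx).2
    · exact Or.inr (hsurj (-x) (Finset.mem_filter.mpr ⟨(hmem_s _).2 (hneg x hx), by omega⟩))
  have hgap : ∀ (d : ℕ) (p q : Fin m), (q : ℕ) = (p : ℕ) + d → a p + d ≤ a q := by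
    intro d
    induction d with
    | zero =>
      intro p q h
      have : p = q := Fin.ext (by omega)
      subst this
      simp
    | succ d ihd =>
      intro p q h
      have hq := q.isLt
      have hq' : (p : ℕ) + d < m := by omega
      have h1 := ihd p ⟨(p : ℕ) + d, hq'⟩ rfl
      have h2 : a ⟨(p : ℕ) + d, hq'⟩ < a q := haS (by rw [Fin.lt_def]; simp; omega)
      push_cast
      push_cast at h1
      omega
  have halow : ∀ j : Fin m, ((j : ℕ) : ℤ) + 1 ≤ a j := by
    intro j
    have h0 : (0 : ℕ) < m := hm
    have h1 := hgap (j : ℕ) ⟨0, h0⟩ j (by simp)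
    have h2 := hapos ⟨0, h0⟩
    omega
  have hahigh : ∀ j : Fin m, a j + ((m : ℤ) - 1 - (j : ℕ)) ≤ (n : ℤ) := by
    intro j
    have hjm := j.isLt
    have hlast : m - 1 < m := by omega
    have h1 := hgap (m - 1 - (j : ℕ)) j ⟨m - 1, hlast⟩ (by simp; omega)
    have h2 := han ⟨m - 1, hlast⟩
    omega
  set e : ℤ → ℤ := mkE m a with he_def
  have hea : ∀ j, e (a j) = ((j : ℕ) : ℤ) + 1 := fun j => mkE_pos hainj j
  have hena : ∀ j, e (-(a j)) = -(((j : ℕ) : ℤ) + 1) := fun j => mkE_neg hainj hapos j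
  have heSM : ∀ x ∈ A, ∀ y ∈ A, x < y → e x < e y := by
    intro x hx y hy hxy
    rcases hcases x hx with ⟨i, rfl⟩ | ⟨i, hi⟩ <;>
      rcases hcases y hy with ⟨j, rfl⟩ | ⟨j, hj⟩
    · rw [hea, hea]
      have h1 : i < j := haS.lt_iff_lt.mp hxy
      have := Fin.lt_def.mp h1
      omega
    · exfalso
      have := hapos i; have := hapos j
      omega
    · have hx' : x = -(a i) := by omega
      subst hx'
      rw [hena, hea]
      have := hapos i; have := hapos j
      omega
    · have hx' : x = -(a i) := by omega
      have hy' : y = -(a j) := by omega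
      subst hx'; subst hy'
      rw [hena, hena]
      have h1 : a j < a i := by omega
      have h2 := Fin.lt_def.mp (haS.lt_iff_lt.mp h1)
      omega
  have hle : ∀ x ∈ A, ∀ y ∈ A, (x ≤ y ↔ e x ≤ e y) := by
    intro x hx y hy
    constructor
    · intro h
      rcases eq_or_lt_of_le h with rfl | h
      · exact le_refl _
      · exact (heSM x hx y hy h).le
    · intro h
      by_contra hc
      push_neg at hc
      exact absurd h (not_le.mpr (heSM y hy x hx hc))
  have heneg : ∀ x ∈ A, e (-x) = -(e x) := by
    intro x hx
    rcases hcases x hx with ⟨i, rfl⟩ | ⟨i, hi⟩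
    · rw [hena, hea]
    · have hx' : x = -(a i) := by omega
      subst hx'
      rw [neg_neg, hea, hena]
      ring
  have hminp : ∀ x ∈ A, ∀ y ∈ A, e (min x y) = min (e x) (e y) := by
    intro x hx y hy
    rcases le_total x y with h | h
    · rw [min_eq_left h, min_eq_left ((hle x hx y hy).mp h)]
    · rw [min_eq_right h, min_eq_right ((hle y hy x hx).mp h)]
  have hmaxp : ∀ x ∈ A, ∀ y ∈ A, e (max x y) = max (e x) (e y) := by
    intro x hx y hy
    rcases le_total x y with h | h
    · rw [max_eq_right h, max_eq_right ((hle x hx y hy).mp h)]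
    · rw [max_eq_left h, max_eq_left ((hle y hy x hx).mp h)]
  have hmapsto : Set.MapsTo e A (Zeven m) := by
    intro x hx
    rcases hcases x hx with ⟨i, rfl⟩ | ⟨i, hi⟩
    · rw [hea]
      have := i.isLt
      simp only [Zeven, Set.mem_setOf_eq]
      omega
    · have hx' : x = -(a i) := by omega
      subst hx'
      rw [hena]
      have := i.isLt
      simp only [Zeven, Set.mem_setOf_eq]
      omega
  have hshom : SHom A (Zeven m) e := by
    refine ⟨hmapsto, fun x hx y hy => ⟨hminp x hx y hy, hmaxp x hx y hy, heneg x hx, ?_⟩⟩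
    rw [SImp, SImp]
    by_cases h : x ≤ y
    · rw [if_pos h, if_pos ((hle x hx y hy).mp h), hmaxp (-x) (hneg x hx) y hy, heneg x hx]
    · rw [if_neg h, if_neg (fun hc => h ((hle x hx y hy).mpr hc)),
        hminp (-x) (hneg x hx) y hy, heneg x hx]
  have hinjOn : Set.InjOn e A := by
    intro x hx y hy hxy
    by_contra hne
    rcases lt_or_gt_of_ne hne with h | h
    · exact absurd hxy (ne_of_lt (heSM x hx y hy h))
    · exact absurd hxy.symm (ne_of_lt (heSM y hy x hx h))
  have hsurjOn : Set.SurjOn e A (Zeven m) := by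
    intro y hy
    obtain ⟨⟨hy1, hy2⟩, hy0⟩ := hy
    rcases lt_trichotomy 0 y with h | h | h
    · have hj : (y - 1).toNat < m := by omega
      refine ⟨a ⟨(y - 1).toNat, hj⟩, haA _, ?_⟩
      rw [hea]
      have hval : ((⟨(y - 1).toNat, hj⟩ : Fin m) : ℕ) = (y - 1).toNat := rfl
      rw [hval]
      omega
    · omega
    · have hj : (-y - 1).toNat < m := by omega
      refine ⟨-(a ⟨(-y - 1).toNat, hj⟩), hneg _ (haA _), ?_⟩
      rw [hena]
      have hval : ((⟨(-y - 1).toNat, hj⟩ : Fin m) : ℕ) = (-y - 1).toNat := rfl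
      rw [hval]
      omega
  have hrt : ∀ x ∈ A, mkE' m a (e x) = x := by
    intro x hx
    rcases hcases x hx with ⟨i, rfl⟩ | ⟨i, hi⟩
    · rw [hea]
      have hi1 : (1 : ℤ) ≤ (i : ℕ) + 1 := by omega
      have hi2 : ((i : ℕ) : ℤ) + 1 ≤ (m : ℤ) := by have := i.isLt; omega
      have hj : (((i : ℕ) : ℤ) + 1 - 1).toNat < m := by have := i.isLt; omega
      rw [mkE'_pos hi1 hi2 hj]
      congr 1
      exact Fin.ext (by simp)
    · have hx' : x = -(a i) := by omega
      subst hx'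
      rw [hena]
      have hi1 : -(((i : ℕ) : ℤ) + 1) ≤ -1 := by omega
      have hi2 : -(m : ℤ) ≤ -(((i : ℕ) : ℤ) + 1) := by have := i.isLt; omega
      have hj : (-(-(((i : ℕ) : ℤ) + 1)) - 1).toNat < m := by have := i.isLt; omega
      rw [mkE'_neg hi1 hi2 hj]
      congr 2
      exact Fin.ext (by simp)
  -- construction of φ
  have hbS : StrictMono (fun j : Fin m => (n : ℤ) - m + (j : ℕ) + 1) := by
    intro p q h
    have := Fin.lt_def.mp h
    dsimp only
    omega
  obtain ⟨χ, hχP, hχmem⟩ := chainU_aux n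
    (∑ j : Fin m, (((n : ℤ) - m + (j : ℕ) + 1) - a j).toNat) m a
    (fun j : Fin m => (n : ℤ) - m + (j : ℕ) + 1) haS hbS hapos
    (fun j => by have h1 := hahigh j; have := j.isLt; omega)
    (fun j => by have := j.isLt; omega)
    (le_refl _)
  obtain ⟨φ, hφP, hφmem⟩ := gsteps n a (n - m)
    (fun j : Fin m => (n : ℤ) - m + (j : ℕ) + 1) χ hχP
    (fun j => by omega)
    (fun j => by have := j.isLt; omega)
    hχmem
  have hφval : ∀ j : Fin m, ((j : ℕ) : ℤ) + 1 ∈ φ (a j) ∧ -(((j : ℕ) : ℤ) + 1) ∈ φ (-(a j)) := by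
    intro j
    have h := hφmem j
    have heqv : (n : ℤ) - m + (j : ℕ) + 1 - ((n - m : ℕ) : ℤ) = ((j : ℕ) : ℤ) + 1 := by omega
    rw [heqv] at h
    exact h
  have hφdom : A ⊆ φ.Dom := by
    intro x hx
    rcases hcases x hx with ⟨i, rfl⟩ | ⟨i, hi⟩
    · exact (PFun.mem_dom _ _).mpr ⟨_, (hφval i).1⟩
    · have hx' : x = -(a i) := by omega
      subst hx'
      exact (PFun.mem_dom _ _).mpr ⟨_, (hφval i).2⟩
  have hφe : ∀ x ∈ A, e x ∈ φ x := by
    intro x hx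
    rcases hcases x hx with ⟨i, rfl⟩ | ⟨i, hi⟩
    · rw [hea]; exact (hφval i).1
    · have hx' : x = -(a i) := by omega
      subst hx'
      rw [hena]; exact (hφval i).2
  -- construction of ψ
  have hidS : StrictMono (fun j : Fin m => ((j : ℕ) : ℤ) + 1) := by
    intro p q h
    have := Fin.lt_def.mp h
    dsimp only
    omega
  obtain ⟨ψ, hψP, hψmem⟩ := chainU_aux n
    (∑ j : Fin m, (a j - (((j : ℕ) : ℤ) + 1)).toNat) m
    (fun j : Fin m => ((j : ℕ) : ℤ) + 1) a hidS haS
    (fun j => by omega)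
    (fun j => by exact halow j)
    han
    (le_refl _)
  have hψval : ∀ y ∈ Zeven m, mkE' m a y ∈ ψ y := by
    intro y hy
    obtain ⟨⟨hy1, hy2⟩, hy0⟩ := hy
    rcases lt_trichotomy 0 y with h | h | h
    · have hj : (y - 1).toNat < m := by omega
      have hmem := (hψmem ⟨(y - 1).toNat, hj⟩).1
      have heqy : ((y - 1).toNat : ℤ) + 1 = y := by omega
      rw [heqy] at hmem
      rw [mkE'_pos (by omega) (by omega) hj]
      exact hmem
    · omega
    · have hj : (-y - 1).toNat < m := by omega
      have hmem := (hψmem ⟨(-y - 1).toNat, hj⟩).2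
      have heqy : -(((-y - 1).toNat : ℤ) + 1) = y := by omega
      rw [heqy] at hmem
      rw [mkE'_neg (by omega) (by omega) hj]
      exact hmem
  have hψdom : Zeven m ⊆ ψ.Dom := fun y hy => (PFun.mem_dom _ _).mpr ⟨_, hψval y hy⟩
  have htr : ∀ y ∈ Zeven m, e (mkE' m a y) = y := by
    intro y hy
    obtain ⟨⟨hy1, hy2⟩, hy0⟩ := hy
    rcases lt_trichotomy 0 y with h | h | h
    · have hj : (y - 1).toNat < m := by omega
      rw [mkE'_pos (by omega) (by omega) hj, hea]
      have hval : ((⟨(y - 1).toNat, hj⟩ : Fin m) : ℕ) = (y - 1).toNat := rfl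
      rw [hval]
      omega
    · omega
    · have hj : (-y - 1).toNat < m := by omega
      rw [mkE'_neg (by omega) (by omega) hj, hena]
      have hval : ((⟨(-y - 1).toNat, hj⟩ : Fin m) : ℕ) = (-y - 1).toNat := rfl
      rw [hval]
      omega
  exact ⟨φ, hφP, hφdom, e, hφe, hshom, ⟨hmapsto, hinjOn, hsurjOn⟩, ψ, hψP, hψdom,
    mkE' m a, hψval, hrt, htr⟩
end

section
/- Let n ≥ 2. Every partial endomorphism of Z_{2n} other than the identity map of Z_{2n} equals, as a partial function on Z_{2n} (same domain and same values), a finite composition of the maps f_2, …, f_n, g. -/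
/-- `h` with domain `D` is a partial endomorphism of (the algebra on) `Z`. -/
def PartialEnd (Z D : Set ℤ) (h : ℤ → ℤ) : Prop :=
  Subalg Z D ∧ Subalg Z (h '' D) ∧ SHom D (h '' D) h

namespace Stmt7Aux

/-- spec of a generated partial map -/
def GSpec (n : ℕ) (φ : ℤ →. ℤ) (S : Set ℤ) (f : ℤ → ℤ) : Prop :=
  FinComp (GenEven n) φ ∧ φ.Dom = S ∧ ∀ a ∈ S, φ a = Part.some (f a)

lemma res_dom (f : ℤ → ℤ) (s : Set ℤ) : (PFun.res f s).Dom = s := by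
  ext a
  simp [PFun.mem_dom, PFun.mem_res]

lemma res_apply (f : ℤ → ℤ) (s : Set ℤ) {a : ℤ} (ha : a ∈ s) :
    PFun.res f s a = Part.some (f a) := by
  exact Part.eq_some_iff.mpr ((PFun.mem_res f s a (f a)).mpr ⟨ha, rfl⟩)

lemma gspec_comp {n : ℕ} {φ₁ φ₂ : ℤ →. ℤ} {S₁ S₂ S : Set ℤ} {f₁ f₂ f : ℤ → ℤ}
    (h₁ : GSpec n φ₁ S₁ f₁) (h₂ : GSpec n φ₂ S₂ f₂)
    (hS : ∀ a, a ∈ S ↔ a ∈ S₂ ∧ f₂ a ∈ S₁)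
    (hf : ∀ a ∈ S, f₁ (f₂ a) = f a) :
    GSpec n (φ₁.comp φ₂) S f := by
  obtain ⟨c₁, d₁, v₁⟩ := h₁
  obtain ⟨c₂, d₂, v₂⟩ := h₂
  refine ⟨FinComp.comp c₁ c₂, ?_, ?_⟩
  · ext a
    constructor
    · intro ha
      rw [PFun.mem_dom] at ha
      obtain ⟨y, hy⟩ := ha
      rw [PFun.comp_apply] at hy
      replace hy := Part.mem_bind_iff.mp hy
      obtain ⟨z, hz, hy⟩ := hy
      have haS₂ : a ∈ S₂ := d₂ ▸ (PFun.mem_dom φ₂ a).mpr ⟨z, hz⟩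
      have hz' : z = f₂ a := by
        have := v₂ a haS₂
        rw [this, Part.mem_some_iff] at hz
        exact hz
      subst hz'
      have : f₂ a ∈ S₁ := d₁ ▸ (PFun.mem_dom φ₁ (f₂ a)).mpr ⟨y, hy⟩
      exact (hS a).mpr ⟨haS₂, this⟩
    · intro ha
      obtain ⟨haS₂, hfa⟩ := (hS a).mp ha
      rw [PFun.mem_dom]
      refine ⟨f₁ (f₂ a), ?_⟩
      rw [PFun.comp_apply, v₂ a haS₂, Part.bind_some (f := φ₁), v₁ _ hfa]
      exact Part.mem_some _
  · intro a ha
    obtain ⟨haS₂, hfa⟩ := (hS a).mp ha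
    rw [PFun.comp_apply, v₂ a haS₂, Part.bind_some (f := φ₁), v₁ _ hfa, hf a ha]

lemma gspec_congr {n : ℕ} {φ : ℤ →. ℤ} {S S' : Set ℤ} {f f' : ℤ → ℤ}
    (h : GSpec n φ S f) (hS : S = S') (hf : ∀ a ∈ S', f a = f' a) :
    GSpec n φ S' f' := by
  subst hS
  exact ⟨h.1, h.2.1, fun a ha => (h.2.2 a ha).trans (by rw [hf a ha])⟩


/-- domain with ±m removed, as a setOf -/
def Dfree (n : ℕ) (m : ℤ) : Set ℤ := {x | ((-(n:ℤ) ≤ x ∧ x ≤ n) ∧ x ≠ 0) ∧ x ≠ m ∧ x ≠ -m}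

lemma zdiff (n : ℕ) (m : ℤ) : Zeven n \ {m, -m} = Dfree n m := by
  ext x
  simp only [Zeven, Dfree, Set.mem_diff, Set.mem_setOf_eq, Set.mem_insert_iff,
    Set.mem_singleton_iff, not_or]

def gfun : ℤ → ℤ := fun a => if 0 < a then a - 1 else a + 1
def ffun (i : ℕ) : ℤ → ℤ := fun a =>
  if a = (i : ℤ) - 1 then (i : ℤ) else if a = -((i : ℤ) - 1) then -(i : ℤ) else a

lemma gspec_g (n : ℕ) : GSpec n (gE n) (Dfree n 1) gfun := by
  refine ⟨FinComp.base (Or.inr rfl), ?_, ?_⟩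
  · rw [gE, res_dom, zdiff]
  · intro a ha
    rw [← zdiff] at ha
    exact res_apply _ _ ha

lemma gspec_f (n i : ℕ) (h2 : 2 ≤ i) (hin : i ≤ n) :
    GSpec n (fE n i) (Dfree n i) (ffun i) := by
  refine ⟨FinComp.base (Or.inl ⟨i, h2, hin, rfl⟩), ?_, ?_⟩
  · rw [fE, res_dom, zdiff]
  · intro a ha
    rw [← zdiff] at ha
    exact res_apply _ _ ha


def efun (r : ℤ) : ℤ → ℤ := fun x =>
  if 0 < x ∧ x ≤ r then x + 1 else if -r ≤ x ∧ x < 0 then x - 1 else x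

def cfun (r : ℤ) : ℤ → ℤ := fun x =>
  if 0 < x ∧ x ≤ r then x else if -r ≤ x ∧ x < 0 then x
  else if 0 < x then x - 1 else x + 1

lemma gspec_E (n : ℕ) (hn : 2 ≤ n) :
    ∀ r : ℕ, 1 ≤ r → r + 1 ≤ n →
    ∃ φ, GSpec n φ (Dfree n ((r:ℤ)+1)) (efun (r:ℤ)) := by
  intro r
  induction r with
  | zero => intro h; omega
  | succ r ih =>
    intro _ hrn
    rcases Nat.eq_zero_or_pos r with hr0 | hrpos
    · subst hr0
      refine ⟨fE n 2, gspec_congr (gspec_f n 2 (le_refl 2) (by omega)) ?_ ?_⟩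
      · norm_num [Dfree]
      · intro a _
        simp only [ffun, efun]
        norm_num
        split_ifs <;> omega
    · -- E_{r+1} = E_r ∘ f_{r+2}
      obtain ⟨φ', hφ'⟩ := ih hrpos (by omega)
      refine ⟨φ'.comp (fE n (r+2)),
        gspec_comp hφ' (gspec_f n (r+2) (by omega) (by omega)) ?_ ?_⟩
      · intro a
        simp only [Dfree, Set.mem_setOf_eq, ffun]
        push_cast
        constructor
        · intro h
          refine ⟨⟨h.1, by omega, by omega⟩, ?_⟩
          split_ifs <;> [omega; omega; omega]
        · intro ⟨h, _⟩
          exact ⟨h.1, by omega, by omega⟩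
      · intro a ha
        simp only [Dfree, Set.mem_setOf_eq] at ha
        simp only [ffun, efun]
        push_cast
        split_ifs <;> omega

lemma gspec_c (n : ℕ) (hn : 2 ≤ n) (r : ℕ) (hrn : r + 1 ≤ n) :
    ∃ φ, GSpec n φ (Dfree n ((r:ℤ)+1)) (cfun (r:ℤ)) := by
  rcases Nat.eq_zero_or_pos r with hr0 | hrpos
  · subst hr0
    refine ⟨gE n, gspec_congr (gspec_g n) ?_ ?_⟩
    · norm_num [Dfree]
    · intro a _
      simp only [gfun, cfun]
      norm_num
      split_ifs <;> omega
  · obtain ⟨φ', hφ'⟩ := gspec_E n hn r hrpos hrn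
    refine ⟨(gE n).comp φ', gspec_comp (gspec_g n) hφ' ?_ ?_⟩
    · intro a
      simp only [Dfree, Set.mem_setOf_eq, efun]
      constructor
      · intro h
        refine ⟨h, ?_⟩
        split_ifs <;> refine ⟨⟨by omega, by omega⟩, by omega, by omega⟩
      · exact fun h => h.1
    · intro a ha
      simp only [Dfree, Set.mem_setOf_eq] at ha
      simp only [efun, gfun, cfun]
      split_ifs <;> omega

def SB (n : ℕ) (k m : ℤ) : Set ℤ :=
  {x | ((-(n:ℤ) ≤ x ∧ x ≤ n) ∧ x ≠ 0) ∧ ¬(k+1 ≤ x ∧ x ≤ k+m) ∧ ¬(-k-m ≤ x ∧ x ≤ -k-1)}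

def wfun (k m : ℤ) : ℤ → ℤ := fun x =>
  if 0 < x ∧ x ≤ k then x else if -k ≤ x ∧ x < 0 then x
  else if 0 < x then x - m else x + m

lemma gspec_I (n : ℕ) (hn : 2 ≤ n) (k : ℕ) (hk1 : 1 ≤ k) (hkn : k + 1 ≤ n) :
    ∃ φ, GSpec n φ {x : ℤ | (1 ≤ x ∧ x ≤ (k:ℤ)) ∨ (-(k:ℤ) ≤ x ∧ x ≤ -1)} (fun x => x) := by
  have aux : ∀ m : ℕ, 1 ≤ m → k + m ≤ n →
      ∃ φ, GSpec n φ (SB n (k:ℤ) (m:ℤ)) (wfun (k:ℤ) (m:ℤ)) := by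
    intro m
    induction m with
    | zero => intro h; omega
    | succ m ih =>
      intro _ hmn
      rcases Nat.eq_zero_or_pos m with hm0 | hmpos
      · subst hm0
        obtain ⟨φ, hφ⟩ := gspec_c n hn k (by omega)
        refine ⟨φ, gspec_congr hφ ?_ ?_⟩
        · ext x
          simp only [Dfree, SB, Set.mem_setOf_eq]
          push_cast
          constructor
          · intro h; exact ⟨h.1, by omega, by omega⟩
          · intro h; exact ⟨h.1, by omega, by omega⟩
        · intro a ha
          simp only [SB, Set.mem_setOf_eq] at ha
          simp only [cfun, wfun]
          push_cast
          split_ifs <;> omega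
      · obtain ⟨φ', hφ'⟩ := ih hmpos (by omega)
        obtain ⟨ψ, hψ⟩ := gspec_c n hn k (by omega)
        refine ⟨φ'.comp ψ, gspec_comp hφ' hψ ?_ ?_⟩
        · intro a
          simp only [Dfree, SB, Set.mem_setOf_eq, cfun]
          push_cast
          constructor
          · intro h
            refine ⟨⟨h.1, by omega, by omega⟩, ?_⟩
            split_ifs <;> refine ⟨⟨by omega, by omega⟩, by omega, by omega⟩
          · intro ⟨h1, h2⟩
            split_ifs at h2 <;> exact ⟨h1.1, by omega, by omega⟩
        · intro a ha
          simp only [SB, Set.mem_setOf_eq] at ha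
          simp only [cfun, wfun]
          push_cast
          split_ifs <;> omega
  obtain ⟨φ, hφ⟩ := aux (n - k) (by omega) (by omega)
  refine ⟨φ, gspec_congr hφ ?_ ?_⟩
  · ext x
    simp only [SB, Set.mem_setOf_eq]
    have : ((n - k : ℕ) : ℤ) = (n:ℤ) - k := by push_cast [Nat.cast_sub (by omega : k ≤ n)]; ring
    rw [this]
    constructor
    · intro h; omega
    · intro h; omega
  · intro a ha
    simp only [Set.mem_setOf_eq] at ha
    simp only [wfun]
    split_ifs <;> omega


def Good (n : ℕ) (D : Set ℤ) (h : ℤ → ℤ) : Prop :=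
  D.Nonempty ∧ D ⊆ Zeven n ∧ (∀ a ∈ D, -a ∈ D) ∧ (∀ a ∈ D, h (-a) = -h a) ∧
  (∀ a ∈ D, ∀ b ∈ D, a < b → h a < h b) ∧ (∀ a ∈ D, h a ∈ Zeven n)

lemma pe_good {n : ℕ} {D : Set ℤ} {h : ℤ → ℤ} (hpe : PartialEnd (Zeven n) D h) :
    Good n D h := by
  obtain ⟨⟨Dne, Dsub, Dcl⟩, ⟨_, Tsub, _⟩, maps, hom⟩ := hpe
  have hneg : ∀ a ∈ D, -a ∈ D := fun a ha => (Dcl a ha a ha).2.2.1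
  have hodd : ∀ a ∈ D, h (-a) = -h a := fun a ha => (hom a ha a ha).2.2.1
  have hmaps : ∀ a ∈ D, h a ∈ Zeven n := fun a ha => Tsub (maps ha)
  refine ⟨Dne, Dsub, hneg, hodd, ?_, hmaps⟩
  intro a ha b hb hab
  have hle : h a ≤ h b := by
    have hmax := (hom a ha b hb).2.1
    rw [max_eq_right (le_of_lt hab)] at hmax
    rw [hmax]
    exact le_max_left _ _
  rcases lt_or_eq_of_le hle with hlt | heq
  · exact hlt
  · exfalso
    -- h a = h b leads to h b = 0
    have hSImp := (hom b hb a ha).2.2.2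
    have hmin := (hom (-b) (hneg b hb) a ha).1
    have hSba : SImp b a = min (-b) a := by
      rw [SImp, if_neg (not_le.mpr hab)]
    have h1 : h (min (-b) a) = min (h (-b)) (h a) := hmin
    rw [hodd b hb] at h1
    have h2 : SImp (h b) (h a) = max (-(h b)) (h a) := by
      rw [SImp, if_pos (le_of_eq heq.symm)]
    rw [hSba, h1, h2, ← heq] at hSImp
    -- hSImp : min (-(h a)) (h a) = max (-(h a)) (h a)
    have hz := hmaps a ha
    rw [Zeven, Set.mem_setOf_eq] at hz
    have c1 : min (-(h a)) (h a) ≤ -(h a) := min_le_left _ _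
    have c2 : h a ≤ max (-(h a)) (h a) := le_max_right _ _
    have c3 : min (-(h a)) (h a) ≤ h a := min_le_right _ _
    have c4 : -(h a) ≤ max (-(h a)) (h a) := le_max_left _ _
    rw [hSImp] at c1 c3
    omega

lemma good_pos {n : ℕ} {D : Set ℤ} {h : ℤ → ℤ} (hg : Good n D h) :
    ∀ a ∈ D, 0 < a → 0 < h a := by
  intro a ha hpos
  have h1 := hg.2.2.2.2.1 (-a) (hg.2.2.1 a ha) a ha (by omega)
  rw [hg.2.2.2.1 a ha] at h1
  omega

open Classical in
/-- one term of the measure -/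
noncomputable def term (n : ℕ) (D : Set ℤ) (h : ℤ → ℤ) (a : ℤ) : ℕ :=
  if a ∈ D then (n^2+1) * a.toNat + (h a).toNat else 0

lemma term_of_mem {n : ℕ} {D : Set ℤ} {h : ℤ → ℤ} {a : ℤ} (ha : a ∈ D) :
    term n D h a = (n^2+1) * a.toNat + (h a).toNat := by
  rw [term, if_pos ha]

lemma term_of_not_mem {n : ℕ} {D : Set ℤ} {h : ℤ → ℤ} {a : ℤ} (ha : a ∉ D) :
    term n D h a = 0 := by
  rw [term, if_neg ha]

noncomputable def meas (n : ℕ) (D : Set ℤ) (h : ℤ → ℤ) : ℕ :=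
  ∑ a ∈ Finset.Icc (1:ℤ) (n:ℤ), term n D h a


/-- inverse of the collapse map `cfun r` (on the relevant region) -/
def ufun (r : ℤ) : ℤ → ℤ := fun x =>
  if 0 < x ∧ x ≤ r then x else if x < 0 ∧ -r ≤ x then x
  else if 0 < x then x + 1 else x - 1

lemma meas_shrink (n : ℕ) (D : Set ℤ) (h : ℤ → ℤ) (r : ℤ)
    (hr0 : 0 ≤ r) (hrn : r + 1 ≤ (n:ℤ)) (hrD : (r+1) ∉ D) (hsub : D ⊆ Zeven n)
    (hex : ∃ p ∈ D, r + 1 < p) :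
    meas n {x | x ≠ 0 ∧ ufun r x ∈ D} (h ∘ ufun r) < meas n D h := by
  classical
  set C := n^2+1 with hC
  set D' : Set ℤ := {x | x ≠ 0 ∧ ufun r x ∈ D} with hD'
  set h' : ℤ → ℤ := h ∘ ufun r with hh'
  set nxt : ℤ → ℤ := fun a => if a ≤ r then a else a + 1 with hnxt
  have hnD : ((n:ℤ)+1) ∉ D := fun c => by have := (hsub c).1.2; omega
  have key : ∀ a ∈ Finset.Icc (1:ℤ) (n:ℤ),
      term n D' h' a + (if r < a ∧ a + 1 ∈ D then C else 0) = term n D h (nxt a) := by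
    intro a haI
    rw [Finset.mem_Icc] at haI
    by_cases har : a ≤ r
    · have hua : ufun r a = a := by
        simp only [ufun]
        split_ifs <;> omega
      have hnx : nxt a = a := by simp only [hnxt]; rw [if_pos har]
      rw [hnx, if_neg (by omega), add_zero]
      by_cases haD : a ∈ D
      · rw [term_of_mem (show a ∈ D' from ⟨by omega, by rw [hua]; exact haD⟩),
          term_of_mem haD]
        simp only [hh', Function.comp_apply, hua]
      · rw [term_of_not_mem (show a ∉ D' from fun hc => haD (hua ▸ hc.2)),
          term_of_not_mem haD]
    · have hua : ufun r a = a + 1 := by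
        simp only [ufun]
        split_ifs <;> omega
      have hnx : nxt a = a + 1 := by simp only [hnxt]; rw [if_neg har]
      rw [hnx]
      by_cases haD : a + 1 ∈ D
      · rw [if_pos ⟨by omega, haD⟩,
          term_of_mem (show a ∈ D' from ⟨by omega, by rw [hua]; exact haD⟩),
          term_of_mem haD]
        have h1 : h' a = h (a+1) := by simp only [hh', Function.comp_apply, hua]
        have h2 : (a+1).toNat = a.toNat + 1 := by omega
        rw [h1, h2]
        ring
      · rw [if_neg (by tauto),
          term_of_not_mem (show a ∉ D' from fun hc => haD (hua ▸ hc.2)),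
          term_of_not_mem haD]
  have sum_eq : ∑ a ∈ Finset.Icc (1:ℤ) (n:ℤ), term n D h (nxt a) = meas n D h := by
    have hinj : ∀ x ∈ Finset.Icc (1:ℤ) (n:ℤ), ∀ y ∈ Finset.Icc (1:ℤ) (n:ℤ),
        nxt x = nxt y → x = y := by
      intro x hx y hy hxy
      simp only [hnxt] at hxy
      split_ifs at hxy <;> omega
    rw [← Finset.sum_image hinj]
    have himg : (Finset.Icc (1:ℤ) (n:ℤ)).image nxt
        = Finset.Icc (1:ℤ) ((n:ℤ)+1) \ {r+1} := by
      ext b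
      simp only [Finset.mem_image, Finset.mem_Icc, Finset.mem_sdiff,
        Finset.mem_singleton, hnxt]
      constructor
      · rintro ⟨a, ha, hab⟩
        split_ifs at hab <;> omega
      · intro hb
        refine ⟨if b ≤ r then b else b - 1, ?_, ?_⟩ <;> split_ifs <;> omega
    rw [himg]
    have hmem : r + 1 ∈ Finset.Icc (1:ℤ) ((n:ℤ)+1) := by
      rw [Finset.mem_Icc]
      obtain ⟨p, hp, hplt⟩ := hex
      have hpn : p ≤ (n:ℤ) := (hsub hp).1.2
      omega
    have e1 := Finset.sum_eq_sum_sdiff_singleton_add hmem (term n D h)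
    rw [term_of_not_mem hrD, add_zero] at e1
    rw [← e1]
    have hins : Finset.Icc (1:ℤ) ((n:ℤ)+1) = insert ((n:ℤ)+1) (Finset.Icc (1:ℤ) (n:ℤ)) := by
      ext x
      simp only [Finset.mem_Icc, Finset.mem_insert]
      omega
    rw [hins, Finset.sum_insert (by simp only [Finset.mem_Icc]; omega),
      term_of_not_mem hnD, zero_add, meas]
  have total := Finset.sum_add_distrib (s := Finset.Icc (1:ℤ) (n:ℤ))
    (f := term n D' h') (g := fun a => if r < a ∧ a + 1 ∈ D then C else 0)
  rw [Finset.sum_congr rfl key, sum_eq] at total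
  have hpos : 0 < ∑ a ∈ Finset.Icc (1:ℤ) (n:ℤ), (if r < a ∧ a + 1 ∈ D then C else 0) := by
    obtain ⟨p, hp, hplt⟩ := hex
    have hpn := (hsub hp).1.2
    have hsingle : C ≤ ∑ a ∈ Finset.Icc (1:ℤ) (n:ℤ), (if r < a ∧ a + 1 ∈ D then C else 0) := by
      have hm : p - 1 ∈ Finset.Icc (1:ℤ) (n:ℤ) := by rw [Finset.mem_Icc]; omega
      have := Finset.single_le_sum
        (f := fun a => if r < a ∧ a + 1 ∈ D then C else 0)
        (fun i _ => Nat.zero_le _) hm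
      have e : (fun a => if r < a ∧ a + 1 ∈ D then C else 0) (p - 1) = C := by
        simp only
        rw [if_pos ⟨by omega, by rw [show p - 1 + 1 = p by ring]; exact hp⟩]
      simp only at e; rw [e] at this
      exact le_trans (le_of_eq rfl) this
    have : 0 < C := by positivity
    omega
  have : meas n D' h' + ∑ a ∈ Finset.Icc (1:ℤ) (n:ℤ),
      (if r < a ∧ a + 1 ∈ D then C else 0) = meas n D h := total.symm
  omega

lemma meas_val (n : ℕ) (D : Set ℤ) (h h' : ℤ → ℤ) (j : ℤ)
    (hjD : j ∈ D) (hj1 : 1 ≤ j) (hjn : j ≤ (n:ℤ))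
    (hlt : (h' j).toNat < (h j).toNat)
    (heq : ∀ a, 1 ≤ a → a ≤ (n:ℤ) → a ≠ j → h' a = h a) :
    meas n D h' < meas n D h := by
  apply Finset.sum_lt_sum
  · intro a haI
    rw [Finset.mem_Icc] at haI
    by_cases haD : a ∈ D
    · rw [term_of_mem haD, term_of_mem haD]
      by_cases haj : a = j
      · subst haj; omega
      · rw [heq a haI.1 haI.2 haj]
    · rw [term_of_not_mem (h := h') haD, term_of_not_mem (h := h) haD]
  · refine ⟨j, by rw [Finset.mem_Icc]; exact ⟨hj1, hjn⟩, ?_⟩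
    rw [term_of_mem hjD, term_of_mem hjD]
    omega


lemma ufun_odd (r : ℤ) {x : ℤ} (hx : x ≠ 0) : ufun r (-x) = -ufun r x := by
  simp only [ufun]
  split_ifs <;> omega

lemma ufun_mono (r : ℤ) {a b : ℤ} (ha : a ≠ 0) (hb : b ≠ 0) (hab : a < b) :
    ufun r a < ufun r b := by
  simp only [ufun]
  split_ifs <;> omega

lemma good_shrink {n : ℕ} {D : Set ℤ} {h : ℤ → ℤ} (hg : Good n D h) (r : ℤ)
    (hr0 : 0 ≤ r) (hex : ∃ p ∈ D, r + 1 < p) :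
    Good n {x | x ≠ 0 ∧ ufun r x ∈ D} (h ∘ ufun r) := by
  obtain ⟨hne, hsub, hsymm, hodd, hmono, hmaps⟩ := hg
  refine ⟨?_, ?_, ?_, ?_, ?_, ?_⟩
  · obtain ⟨p, hp, hplt⟩ := hex
    refine ⟨p - 1, by omega, ?_⟩
    have : ufun r (p-1) = p := by simp only [ufun]; split_ifs <;> omega
    rw [this]; exact hp
  · rintro x ⟨hx0, hxm⟩
    have hb := (hsub hxm).1
    have hcase : (0 < x ∧ (ufun r x = x ∨ ufun r x = x + 1)) ∨
        (x < 0 ∧ (ufun r x = x ∨ ufun r x = x - 1)) := by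
      simp only [ufun]; split_ifs <;> omega
    exact ⟨⟨by omega, by omega⟩, hx0⟩
  · rintro x ⟨hx0, hxm⟩
    exact ⟨by omega, by rw [ufun_odd r hx0]; exact hsymm _ hxm⟩
  · rintro x ⟨hx0, hxm⟩
    simp only [Function.comp_apply]
    rw [ufun_odd r hx0]
    exact hodd _ hxm
  · rintro a ⟨ha0, ham⟩ b ⟨hb0, hbm⟩ hab
    exact hmono _ ham _ hbm (ufun_mono r ha0 hb0 hab)
  · rintro a ⟨ha0, ham⟩
    exact hmaps _ ham

lemma good_inj {n : ℕ} {D : Set ℤ} {h : ℤ → ℤ} (hg : Good n D h) :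
    ∀ x ∈ D, ∀ y ∈ D, h x = h y → x = y := by
  intro x hx y hy hxy
  by_contra hne
  rcases lt_or_gt_of_ne hne with hlt | hlt
  · exact absurd hxy (ne_of_lt (hg.2.2.2.2.1 x hx y hy hlt))
  · exact absurd hxy.symm (ne_of_lt (hg.2.2.2.2.1 y hy x hx hlt))


lemma key (n : ℕ) (hn : 2 ≤ n) :
    ∀ N : ℕ, ∀ D : Set ℤ, ∀ h : ℤ → ℤ,
      meas n D h ≤ N → Good n D h → ¬(D = Zeven n ∧ ∀ a ∈ D, h a = a) →
      ∃ φ, GSpec n φ D h := by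
  intro N
  induction N with
  | zero =>
    intro D h hm hg _
    exfalso
    obtain ⟨⟨d, hd⟩, hsub, hsymm, _, _, _⟩ := hg
    have hd0 : d ≠ 0 := (hsub hd).2
    have hp : ∃ p ∈ D, 0 < p := by
      rcases lt_or_gt_of_ne hd0 with hlt | hlt
      · exact ⟨-d, hsymm d hd, by omega⟩
      · exact ⟨d, hd, hlt⟩
    obtain ⟨p, hpD, hppos⟩ := hp
    have hpn : p ≤ (n:ℤ) := (hsub hpD).1.2
    have hple : 1 ≤ term n D h p := by
      rw [term_of_mem hpD]
      have : 1 ≤ p.toNat := by omega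
      nlinarith [Nat.zero_le ((h p).toNat)]
    have : 1 ≤ meas n D h := by
      refine le_trans hple (Finset.single_le_sum (fun i _ => Nat.zero_le _) ?_)
      rw [Finset.mem_Icc]; omega
    omega
  | succ N ih =>
    intro D h hm hg hid
    classical
    by_cases hAB : ∃ r : ℕ, ((r:ℤ)+1) ∉ D ∧ ∃ p ∈ D, (r:ℤ)+1 < p
    · -- shrink the domain: compose with c_r on the right
      obtain ⟨r, hrD, hex⟩ := hAB
      obtain ⟨p, hpD, hplt⟩ := hex
      have hsub := hg.2.1
      have hpn : p ≤ (n:ℤ) := (hsub hpD).1.2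
      have hr0 : (0:ℤ) ≤ (r:ℤ) := by positivity
      have hrn : (r:ℤ) + 1 ≤ (n:ℤ) := by omega
      set D' : Set ℤ := {x | x ≠ 0 ∧ ufun (r:ℤ) x ∈ D} with hD'
      set h' : ℤ → ℤ := h ∘ ufun (r:ℤ) with hh'
      have hg' : Good n D' h' := good_shrink hg (r:ℤ) hr0 ⟨p, hpD, hplt⟩
      have hm' : meas n D' h' < meas n D h :=
        meas_shrink n D h (r:ℤ) hr0 hrn hrD hsub ⟨p, hpD, hplt⟩
      have hid' : ¬(D' = Zeven n ∧ ∀ a ∈ D', h' a = a) := by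
        rintro ⟨hfull, -⟩
        have hnZ : (n:ℤ) ∈ Zeven n := ⟨⟨by omega, le_refl _⟩, by omega⟩
        rw [← hfull] at hnZ
        obtain ⟨-, hnm⟩ := hnZ
        have hu : ufun (r:ℤ) (n:ℤ) = (n:ℤ) + 1 := by
          simp only [ufun]; split_ifs <;> omega
        rw [hu] at hnm
        have := (hsub hnm).1.2
        omega
      obtain ⟨φ', hφ'⟩ := ih D' h' (by omega) hg' hid'
      obtain ⟨ψ, hψ⟩ := gspec_c n hn r (by omega : r + 1 ≤ n)
      have hcu : ∀ a : ℤ, a ≠ 0 → a ≠ (r:ℤ)+1 → a ≠ -((r:ℤ)+1) →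
          ufun (r:ℤ) (cfun (r:ℤ) a) = a := by
        intro a h1 h2 h3
        simp only [cfun, ufun]
        split_ifs <;> omega
      have hmemD : ∀ a ∈ D, a ≠ 0 ∧ a ≠ (r:ℤ)+1 ∧ a ≠ -((r:ℤ)+1) := by
        intro a haD
        refine ⟨(hsub haD).2, fun e => hrD (e ▸ haD), fun e => ?_⟩
        apply hrD
        have hna := hg.2.2.1 a haD
        rw [e] at hna
        simpa using hna
      refine ⟨φ'.comp ψ, gspec_comp hφ' hψ ?_ ?_⟩
      · intro a
        constructor
        · intro haD
          obtain ⟨ha0, hne, hne'⟩ := hmemD a haD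
          have hb := (hsub haD).1
          refine ⟨⟨⟨hb, ha0⟩, hne, hne'⟩, ?_, ?_⟩
          · simp only [cfun]; split_ifs <;> omega
          · rw [hcu a ha0 hne hne']; exact haD
        · rintro ⟨hDf, hc0, hcm⟩
          obtain ⟨⟨hb, ha0⟩, hne, hne'⟩ := hDf
          rw [hcu a ha0 hne hne'] at hcm
          exact hcm
      · intro a haD
        obtain ⟨ha0, hne, hne'⟩ := hmemD a haD
        simp only [hh', Function.comp_apply]
        rw [hcu a ha0 hne hne']
    · -- domain is a bottom block {±1, …, ±k}
      push_neg at hAB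
      have hsub := hg.2.1
      have hsymm := hg.2.2.1
      have hodd := hg.2.2.2.1
      have hmono := hg.2.2.2.2.1
      have hmaps := hg.2.2.2.2.2
      have hposf := good_pos hg
      have hppos : ∃ p ∈ D, 0 < p := by
        obtain ⟨d, hd⟩ := hg.1
        have hd0 : d ≠ 0 := (hsub hd).2
        rcases lt_or_gt_of_ne hd0 with hlt | hlt
        · exact ⟨-d, hsymm d hd, by omega⟩
        · exact ⟨d, hd, hlt⟩
      have h1D : (1:ℤ) ∈ D := by
        by_contra h1
        obtain ⟨p, hpD, hp0⟩ := hppos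
        have hple := hAB 0 (by simpa using h1) p hpD
        simp only [Nat.cast_zero, zero_add] at hple
        have hp1 : p = 1 := by omega
        exact h1 (hp1 ▸ hpD)
      have hexk : ∃ m : ℕ, ((m:ℤ)+1) ∉ D := ⟨n, fun c => by have := (hsub c).1.2; omega⟩
      set k := Nat.find hexk with hk
      have hkD : ((k:ℤ)+1) ∉ D := Nat.find_spec hexk
      have hbelow : ∀ i : ℤ, 1 ≤ i → i ≤ (k:ℤ) → i ∈ D := by
        intro i h1i hik
        have hm : (i - 1).toNat < k := by omega
        have hfm := not_not.mp (Nat.find_min hexk hm)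
        have hcast : (((i-1).toNat : ℤ)) + 1 = i := by omega
        rwa [hcast] at hfm
      have hk1 : 1 ≤ k := by
        by_contra hk0
        have hkz : k = 0 := by omega
        apply hkD
        rw [hkz]
        simpa using h1D
      have hup : ∀ p ∈ D, 0 < p → p ≤ (k:ℤ) := by
        intro p hpD hp0
        have h2' := hAB k hkD p hpD
        have hpk1 : p ≠ (k:ℤ)+1 := fun e => hkD (e ▸ hpD)
        omega
      have hkn : (k:ℤ) ≤ (n:ℤ) := (hsub (hbelow (k:ℤ) (by omega) le_rfl)).1.2
      have hDchar : D = {x : ℤ | (1 ≤ x ∧ x ≤ (k:ℤ)) ∨ (-(k:ℤ) ≤ x ∧ x ≤ -1)} := by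
        ext x
        simp only [Set.mem_setOf_eq]
        constructor
        · intro hx
          have hx0 : x ≠ 0 := (hsub hx).2
          rcases lt_or_gt_of_ne hx0 with hlt | hlt
          · have := hup (-x) (hsymm x hx) (by omega); right; omega
          · have := hup x hx hlt; left; omega
        · intro hx
          rcases hx with ⟨hx1, hx2⟩ | ⟨hx1, hx2⟩
          · exact hbelow x hx1 hx2
          · have hmem := hsymm _ (hbelow (-x) (by omega) (by omega))
            simpa using hmem
      by_cases hall : ∀ a ∈ D, h a = a
      · -- identity on the bottom block, k < n
        have hkn' : k + 1 ≤ n := by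
          rcases Nat.lt_or_ge k n with hlt | hge
          · omega
          · exfalso
            apply hid
            refine ⟨?_, hall⟩
            have hkn2 : (k:ℤ) = (n:ℤ) := by
              have : (k:ℤ) ≥ (n:ℤ) := by exact_mod_cast hge
              omega
            rw [hDchar]
            ext x
            simp only [Set.mem_setOf_eq, Zeven]
            omega
        obtain ⟨φ, hφ⟩ := gspec_I n hn k hk1 hkn'
        exact ⟨φ, gspec_congr hφ hDchar.symm (fun a ha => (hall a ha).symm)⟩
      · -- push a value up with some f_i on the left
        push_neg at hall
        have hexj : ∃ m : ℕ, ((m:ℤ)+1) ∈ D ∧ h ((m:ℤ)+1) ≠ ((m:ℤ)+1) := by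
          obtain ⟨a, haD, hane⟩ := hall
          have ha0 : a ≠ 0 := (hsub haD).2
          rcases lt_or_gt_of_ne ha0 with hlt | hlt
          · have hc : (((-a-1).toNat : ℤ)) + 1 = -a := by omega
            have hmem : -a ∈ D := hsymm a haD
            have hne' : h (-a) ≠ -a := by
              rw [hodd a haD]
              omega
            exact ⟨(-a-1).toNat, by rw [hc]; exact hmem, by rw [hc]; exact hne'⟩
          · have hc : (((a-1).toNat : ℤ)) + 1 = a := by omega
            exact ⟨(a-1).toNat, by rw [hc]; exact haD, by rw [hc]; exact hane⟩
        set j : ℤ := ((Nat.find hexj : ℕ) : ℤ) + 1 with hj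
        have hjD : j ∈ D := (Nat.find_spec hexj).1
        have hjne : h j ≠ j := (Nat.find_spec hexj).2
        have hj1 : 1 ≤ j := by
          have : (0:ℤ) ≤ ((Nat.find hexj : ℕ) : ℤ) := by positivity
          omega
        have hjmin : ∀ i : ℤ, 1 ≤ i → i < j → i ∈ D → h i = i := by
          intro i h1i hij hiD
          by_contra hne2
          have hmm : (i-1).toNat < Nat.find hexj := by omega
          apply Nat.find_min hexj hmm
          have hc : (((i-1).toNat : ℤ)) + 1 = i := by omega
          rw [hc]
          exact ⟨hiD, hne2⟩
        have hjk : j ≤ (k:ℤ) := hup j hjD (by omega)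
        have hgeb : ∀ m : ℕ, ((m:ℤ)+1) ≤ (k:ℤ) → ((m:ℤ)+1) ≤ h ((m:ℤ)+1) := by
          intro m
          induction m with
          | zero =>
            intro _
            have h2' := hposf 1 h1D one_pos
            have hc : ((0:ℕ):ℤ) + 1 = 1 := by norm_num
            rw [hc]
            omega
          | succ m ihm =>
            intro hmk
            have hc : (((m+1:ℕ)):ℤ) + 1 = ((m:ℤ) + 1) + 1 := by push_cast; ring
            rw [hc] at hmk ⊢
            have hmk' : ((m:ℤ)+1) ≤ (k:ℤ) := by omega
            have hmem1 : ((m:ℤ)+1) ∈ D := hbelow _ (by omega) hmk'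
            have hmem2 : ((m:ℤ)+1+1) ∈ D := hbelow _ (by omega) (by omega)
            have hstep := hmono _ hmem1 _ hmem2 (by omega)
            have hih := ihm hmk'
            omega
        have hjge : j ≤ h j := by
          have hge := hgeb (Nat.find hexj) (by rw [← hj]; exact hjk)
          rw [← hj] at hge
          exact hge
        set m : ℤ := h j with hmdef
        have hmgt : j < m := by omega
        have hmZ := hmaps j hjD
        have hmn : m ≤ (n:ℤ) := hmZ.1.2
        have hm2 : 2 ≤ m := by omega
        set h' : ℤ → ℤ := fun x => if x = j then m - 1 else if x = -j then -(m-1) else h x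
          with hh'
        have hvj : h' j = m - 1 := by simp only [hh']; split_ifs <;> omega
        have hvnj : h' (-j) = -(m-1) := by simp only [hh']; split_ifs <;> omega
        have hvo : ∀ x, x ≠ j → x ≠ -j → h' x = h x := by
          intro x hx1 hx2
          simp only [hh']
          split_ifs <;> first | rfl | omega
        have hinj := good_inj hg
        have hnm : ∀ x ∈ D, x ≠ j → h x ≠ m := fun x hx hxj e =>
          hxj (hinj x hx j hjD (by rw [e, hmdef]))
        have hnegj : h (-j) = -m := by rw [hodd j hjD, ← hmdef]
        have hnmneg : ∀ x ∈ D, x ≠ -j → h x ≠ -m := fun x hx hxj e =>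
          hxj (hinj x hx (-j) (hsymm j hjD) (by rw [e, hnegj]))
        have hm1p : ∀ x ∈ D, h x ≠ m - 1 := by
          intro x hx e
          by_cases hxj : x = j
          · rw [hxj, ← hmdef] at e; omega
          · have hx0 : x ≠ 0 := (hsub hx).2
            have hxpos : 0 < x := by
              by_contra hneg
              have h2' := hposf (-x) (hsymm x hx) (by omega)
              rw [hodd x hx] at h2'
              omega
            have hxltj : x < j := by
              by_contra hge
              have := hmono j hjD x hx (by omega)
              rw [← hmdef] at this
              omega
            have := hjmin x (by omega) hxltj hx
            omega
        have hm1n : ∀ x ∈ D, h x ≠ -(m-1) := by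
          intro x hx e
          exact hm1p (-x) (hsymm x hx) (by rw [hodd x hx]; omega)
        have hg2 : Good n D h' := by
          refine ⟨hg.1, hsub, hsymm, ?_, ?_, ?_⟩
          · intro a haD
            by_cases haj : a = j
            · subst haj
              rw [hvnj, hvj]
            · by_cases haj' : a = -j
              · subst haj'
                rw [neg_neg, hvj, hvnj]
                ring
              · rw [hvo (-a) (fun e => haj' (by omega)) (fun e => haj (by omega)),
                  hvo a haj haj', hodd a haD]
          · intro a haD b hbD hab
            have heqv : ∀ x ∈ D, h' x =
                (if h x = m then m - 1 else if h x = -m then -(m-1) else h x) := by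
              intro x hx
              by_cases hxj : x = j
              · subst hxj
                rw [hvj, if_pos hmdef.symm]
              · by_cases hxj' : x = -j
                · subst hxj'
                  rw [hvnj, hnegj, if_neg (by omega : -m ≠ m), if_pos rfl]
                · rw [hvo x hxj hxj', if_neg (hnm x hx hxj), if_neg (hnmneg x hx hxj')]
            rw [heqv a haD, heqv b hbD]
            have hhab := hmono a haD b hbD hab
            have h1 := hm1p a haD
            have h2 := hm1n a haD
            have h3 := hm1p b hbD
            have h4 := hm1n b hbD
            split_ifs <;> omega
          · intro a haD
            by_cases haj : a = j
            · subst haj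
              rw [hvj]
              exact ⟨⟨by omega, by omega⟩, by omega⟩
            · by_cases haj' : a = -j
              · subst haj'
                rw [hvnj]
                exact ⟨⟨by omega, by omega⟩, by omega⟩
              · rw [hvo a haj haj']
                exact hmaps a haD
        have hm2' : meas n D h' < meas n D h := by
          apply meas_val n D h h' j hjD hj1 (by omega : j ≤ (n:ℤ))
          · rw [hvj, ← hmdef]
            omega
          · intro a h1a h2a haj
            exact hvo a haj (by omega)
        have hid2 : ¬(D = Zeven n ∧ ∀ a ∈ D, h' a = a) := by
          rintro ⟨hfull, hida⟩
          have hj1D : j + 1 ∈ D := by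
            rw [hfull]
            exact ⟨⟨by omega, by omega⟩, by omega⟩
          have e1 : h' (j+1) = j + 1 := hida _ hj1D
          have e2 : h' (j+1) = h (j+1) := hvo _ (by omega) (by omega)
          have hmo := hmono j hjD (j+1) hj1D (by omega)
          rw [← hmdef] at hmo
          omega
        obtain ⟨φ', hφ'⟩ := ih D h' (by omega) hg2 hid2
        set mn : ℕ := m.toNat with hmn
        have hmc : ((mn:ℕ):ℤ) = m := Int.toNat_of_nonneg (by omega)
        have hfspec' : GSpec n (fE n mn) (Dfree n m)
            (fun a => if a = m - 1 then m else if a = -(m-1) then -m else a) := by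
          refine gspec_congr (gspec_f n mn (by omega) (by omega)) (by rw [hmc]) ?_
          intro a _
          simp only [ffun, hmc]
        refine ⟨(fE n mn).comp φ', gspec_comp hfspec' hφ' ?_ ?_⟩
        · intro a
          constructor
          · intro haD
            refine ⟨haD, ?_⟩
            by_cases haj : a = j
            · subst haj
              rw [hvj]
              exact ⟨⟨⟨by omega, by omega⟩, by omega⟩, by omega, by omega⟩
            · by_cases haj' : a = -j
              · subst haj'
                rw [hvnj]
                exact ⟨⟨⟨by omega, by omega⟩, by omega⟩, by omega, by omega⟩
              · rw [hvo a haj haj']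
                have hz := hmaps a haD
                exact ⟨⟨hz.1, hz.2⟩, hnm a haD haj, hnmneg a haD haj'⟩
          · exact fun hx => hx.1
        · intro a haD
          by_cases haj : a = j
          · subst haj
            rw [hvj]
            simp only
            split_ifs <;> omega
          · by_cases haj' : a = -j
            · subst haj'
              rw [hvnj]
              simp only
              have hne := hnegj
              split_ifs <;> omega
            · rw [hvo a haj haj']
              try simp only
              have h1 := hm1p a haD
              have h2 := hm1n a haD
              split_ifs <;> first | rfl | omega

end Stmt7Aux

theorem stmt7 (n : ℕ) (hn : 2 ≤ n) (D : Set ℤ) (h : ℤ → ℤ)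
    (hpe : PartialEnd (Zeven n) D h)
    (hid : ¬(D = Zeven n ∧ ∀ a ∈ D, h a = a)) :
    ∃ φ : ℤ →. ℤ, FinComp (GenEven n) φ ∧ φ.Dom = D ∧ ∀ a ∈ D, h a ∈ φ a := by
  obtain ⟨φ, hc, hdom, hval⟩ :=
    Stmt7Aux.key n hn (Stmt7Aux.meas n D h) D h le_rfl (Stmt7Aux.pe_good hpe) hid
  exact ⟨φ, hc, hdom, fun a ha => by rw [hval a ha]; exact Part.mem_some _⟩
end
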